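/- arXiv:0904.2839 — 3 statements merged into one kernel-verified Lean document; each statement's English description precedes it below -/
import Mathlib

section
/- For every unstable H*V-A-module N, the unstable A-module Tor_1^{H*V}(F_2, N) (the first derived functor of F_2 ⊗_{H*V} − applied to N) is nilpotent. -/
/-!
Common preamble: the mod 2 Steenrod algebra `SteenrodAlgebra` (defined by generators
`Sq i` and the Adem relations), the category `U` of unstable modules over it
(`UnstableModule`, `UnstableHom`), the polynomial algebra `H^*V` for `V` an elementary
abelian 2-group of rank `d` (`HVSetup`), the category `H^*V-U` of unstable
`H^*V`-`A`-modules (`HVModule`, `HVHom`), and the various notions used in the paper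
(nilpotent, reduced, nil-closed, injectives, injective hulls, Brown-Gitler modules,
tensor products, direct sums, the functor `Fix`, bar quotients `Ē = F_2 ⊗_{H^*V} E`, …).
-/

noncomputable section

/-- The Adem relations (together with `Sq⁰ = 1`) on the free `ZMod 2`-algebra
generated by symbols `Sq i`, `i : ℕ`. -/
inductive AdemRel : FreeAlgebra (ZMod 2) ℕ → FreeAlgebra (ZMod 2) ℕ → Prop
  | adem (a b : ℕ) (ha : 0 < a) (hab : a < 2 * b) :
      AdemRel (FreeAlgebra.ι (ZMod 2) a * FreeAlgebra.ι (ZMod 2) b)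
        (∑ c ∈ Finset.range (a / 2 + 1),
          ((Nat.choose (b - c - 1) (a - 2 * c) : ZMod 2)) •
            (FreeAlgebra.ι (ZMod 2) (a + b - c) * FreeAlgebra.ι (ZMod 2) c))
  | unit : AdemRel (FreeAlgebra.ι (ZMod 2) 0) 1

/-- The mod 2 Steenrod algebra `A`. -/
abbrev SteenrodAlgebra : Type := RingQuot AdemRel

/-- The Steenrod squares `Sq i ∈ A`. -/
def Sq (i : ℕ) : SteenrodAlgebra :=
  RingQuot.mkAlgHom (ZMod 2) AdemRel (FreeAlgebra.ι (ZMod 2) i)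

/-- An unstable module over the mod 2 Steenrod algebra: a graded `ZMod 2`-vector space
with a compatible `A`-action such that `Sq i` raises degrees by `i` and
`Sq i x = 0` whenever `i > |x|` (the instability condition).  Objects of `U`. -/
structure UnstableModule : Type 1 where
  carrier : Type
  [acg : AddCommGroup carrier]
  [modA : Module SteenrodAlgebra carrier]
  [modF : Module (ZMod 2) carrier]
  [tower : IsScalarTower (ZMod 2) SteenrodAlgebra carrier]
  grading : ℕ → Submodule (ZMod 2) carrier
  isInternal : DirectSum.IsInternal grading
  sq_mem : ∀ (i n : ℕ) (x : carrier), x ∈ grading n → Sq i • x ∈ grading (n + i)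
  instability : ∀ (i n : ℕ) (x : carrier), x ∈ grading n → n < i → Sq i • x = 0

attribute [instance] UnstableModule.acg UnstableModule.modA UnstableModule.modF
  UnstableModule.tower

/-- Morphisms of `U`: `A`-linear maps of degree zero. -/
structure UnstableHom (M N : UnstableModule) where
  toFun : M.carrier →ₗ[SteenrodAlgebra] N.carrier
  map_grading : ∀ (n : ℕ) (x : M.carrier), x ∈ M.grading n → toFun x ∈ N.grading n

/-- Composition of morphisms of `U`. -/
def UnstableHom.comp {M N P : UnstableModule} (g : UnstableHom N P) (f : UnstableHom M N) :
    UnstableHom M P :=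
  ⟨g.toFun.comp f.toFun, fun n x hx => g.map_grading n _ (f.map_grading n x hx)⟩

/-- The identity morphism of `U`. -/
def UnstableHom.id (M : UnstableModule) : UnstableHom M M :=
  ⟨LinearMap.id, fun _ _ h => h⟩

/-- `M ≅ N` in the category `U`. -/
def UIso (M N : UnstableModule) : Prop :=
  ∃ (f : UnstableHom M N) (g : UnstableHom N M),
    (∀ x, g.toFun (f.toFun x) = x) ∧ ∀ y, f.toFun (g.toFun y) = y

/-- `sq0Iter M k n x` is the `k`-fold iterate of `Sq₀ : x ↦ Sq^{|x|} x` on an element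
`x` of degree `n` (whose `j`-th iterate has degree `2^j * n`). -/
def sq0Iter (M : UnstableModule) : ℕ → ℕ → M.carrier → M.carrier
  | 0, _, x => x
  | k + 1, n, x => Sq (2 ^ k * n) • sq0Iter M k n x

/-- An unstable module is nilpotent if every (homogeneous) element is killed by some
iterate of `Sq₀`. -/
def IsNilpotentU (M : UnstableModule) : Prop :=
  ∀ (n : ℕ) (x : M.carrier), x ∈ M.grading n → ∃ k, sq0Iter M k n x = 0

/-- An unstable module is reduced if `Sq₀ : x ↦ Sq^{|x|} x` is injective. -/
def IsReducedU (M : UnstableModule) : Prop :=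
  ∀ (n : ℕ) (x : M.carrier), x ∈ M.grading n → Sq n • x = 0 → x = 0

/-- An unstable module is nil-closed if it is reduced and `Ker Sq₁ = Im Sq₀`
(on homogeneous elements, `Sq₁ x = Sq^{|x|-1} x` and `Sq₀ y = Sq^{|y|} y`). -/
def IsNilClosedU (M : UnstableModule) : Prop :=
  IsReducedU M ∧
  ∀ (n : ℕ) (x : M.carrier), x ∈ M.grading n →
    (Sq (n - 1) • x = 0 ↔ ∃ (m : ℕ) (y : M.carrier), y ∈ M.grading m ∧ Sq m • y = x)

/-- A graded submodule: an `A`-submodule spanned by its homogeneous elements. -/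
def IsGradedSub (M : UnstableModule) (p : Submodule SteenrodAlgebra M.carrier) : Prop :=
  ∀ x ∈ p, x ∈ Submodule.span (ZMod 2)
    ((p : Set M.carrier) ∩ ⋃ n, ((M.grading n : Submodule (ZMod 2) M.carrier) : Set M.carrier))

/-- Injective objects of the category `U` (lifting property against monomorphisms). -/
def IsInjectiveU (I : UnstableModule) : Prop :=
  ∀ (M N : UnstableModule) (f : UnstableHom M N), Function.Injective f.toFun →
    ∀ g : UnstableHom M I, ∃ h : UnstableHom N I, ∀ x, h.toFun (f.toFun x) = g.toFun x

/-- `i : M ↪ E` exhibits `E` as the injective hull of `M` in `U`: `E` is injective,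
`i` is injective, and the extension is essential (every non-trivial graded
`A`-submodule of `E` meets the image of `M` non-trivially). -/
def IsInjectiveHullU (M E : UnstableModule) (i : UnstableHom M E) : Prop :=
  IsInjectiveU E ∧ Function.Injective i.toFun ∧
  ∀ p : Submodule SteenrodAlgebra E.carrier, IsGradedSub E p → p ≠ ⊥ →
    ∃ x, x ≠ 0 ∧ x ∈ p ∧ x ∈ Set.range i.toFun

/-- The Brown-Gitler module `J(n)`: it represents the functor `M ↦ (Mⁿ)^∨`, i.e.
there is a bijection `Hom_U(M, J(n)) ≅ Hom_{F_2}(Mⁿ, F_2)`, natural in `M`. -/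
def IsBrownGitler (J : UnstableModule) (n : ℕ) : Prop :=
  ∃ Φ : ∀ M : UnstableModule, UnstableHom M J → (↥(M.grading n) →ₗ[ZMod 2] ZMod 2),
    (∀ M, Function.Bijective (Φ M)) ∧
    ∀ (M M' : UnstableModule) (f : UnstableHom M' M) (g : UnstableHom M J)
      (x : ↥(M'.grading n)),
      Φ M' (g.comp f) x = Φ M g ⟨f.toFun x, f.map_grading n x x.2⟩

/-- `T` realizes the tensor product `M ⊗_{F_2} N` in `U` (with the Cartan formula
giving the `A`-action and the total grading). -/
def IsTensorOf (M N T : UnstableModule) : Prop :=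
  ∃ β : M.carrier →ₗ[ZMod 2] N.carrier →ₗ[ZMod 2] T.carrier,
    (∀ (m n : ℕ) (x : M.carrier) (y : N.carrier), x ∈ M.grading m → y ∈ N.grading n →
      β x y ∈ T.grading (m + n)) ∧
    (∀ (k : ℕ) (x : M.carrier) (y : N.carrier),
      Sq k • β x y = ∑ i ∈ Finset.range (k + 1), β (Sq i • x) (Sq (k - i) • y)) ∧
    Function.Bijective (TensorProduct.lift β)

/-- `I` is the direct sum (coproduct in `U`) of the family `F`. -/
def IsDirectSumOf (I : UnstableModule) {ι : Type} (F : ι → UnstableModule) : Prop :=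
  letI := Classical.decEq ι
  ∃ j : ∀ i, UnstableHom (F i) I,
    Function.Bijective
      (DirectSum.toModule SteenrodAlgebra ι I.carrier fun i => (j i).toFun)

/-- An indecomposable (non-trivial) object of `U`: its only idempotent endomorphisms
are `0` and the identity. -/
def IndecomposableU (L : UnstableModule) : Prop :=
  (∃ x : L.carrier, x ≠ 0) ∧
  ∀ e : UnstableHom L L, (∀ x, e.toFun (e.toFun x) = e.toFun x) →
    (∀ x, e.toFun x = 0) ∨ (∀ x, e.toFun x = x)

/-- `H^*V` for `V` an elementary abelian 2-group of rank `d`: a polynomial algebra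
`F_2[t_1, …, t_d]` on generators of degree 1, with its unstable `A`-algebra structure
(`Sq¹ t = t²` and the Cartan formula).  `cV` is the top Dickson invariant
`∏_{0 ≠ u ∈ H¹V} u`. -/
structure HVSetup (d : ℕ) : Type 1 where
  H : Type
  [ring : CommRing H]
  [modA : Module SteenrodAlgebra H]
  [modF : Module (ZMod 2) H]
  [tower : IsScalarTower (ZMod 2) SteenrodAlgebra H]
  grading : ℕ → Submodule (ZMod 2) H
  isInternal : DirectSum.IsInternal grading
  sq_mem : ∀ (i n : ℕ) (x : H), x ∈ grading n → Sq i • x ∈ grading (n + i)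
  instability : ∀ (i n : ℕ) (x : H), x ∈ grading n → n < i → Sq i • x = 0
  one_mem : (1 : H) ∈ grading 0
  mul_mem : ∀ (m n : ℕ) (x y : H), x ∈ grading m → y ∈ grading n → x * y ∈ grading (m + n)
  cartanH : ∀ (k : ℕ) (x y : H),
    Sq k • (x * y) = ∑ i ∈ Finset.range (k + 1), (Sq i • x) * (Sq (k - i) • y)
  gens : Fin d → H
  gens_deg : ∀ i, gens i ∈ grading 1
  sq_one_gen : ∀ i, Sq 1 • gens i = gens i * gens i
  monomial_indep : LinearIndependent (ZMod 2) (fun e : Fin d → ℕ => ∏ i, gens i ^ e i)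
  monomial_span : ⊤ ≤ Submodule.span (ZMod 2) (Set.range fun e : Fin d → ℕ => ∏ i, gens i ^ e i)
  cV : H
  cV_spec : ∃ s : Finset H, (∀ u, u ∈ s ↔ (u ∈ grading 1 ∧ u ≠ 0)) ∧ cV = ∏ u ∈ s, u

attribute [instance] HVSetup.ring HVSetup.modA HVSetup.modF HVSetup.tower

/-- `H^*V` as an object of `U`. -/
@[reducible] def HVSetup.toUnstable {d : ℕ} (V : HVSetup d) : UnstableModule where
  carrier := V.H
  grading := V.grading
  isInternal := V.isInternal
  sq_mem := V.sq_mem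
  instability := V.instability

/-- A representative of an indecomposable direct factor of some `H^*((Z/2)^m)`
(an element of the set `𝓛` of the classification theorems). -/
def IsIndecInjFactor (L : UnstableModule) : Prop :=
  IndecomposableU L ∧
  ∃ (m : ℕ) (V : HVSetup m) (j : UnstableHom L V.toUnstable)
    (r : UnstableHom V.toUnstable L), ∀ x, r.toFun (j.toFun x) = x

/-- An unstable `H^*V`-`A`-module: an object `E` of `U` together with a compatible
`H^*V`-module structure satisfying the Cartan formula, and the data of the unstable
`A`-module `Ē = F_2 ⊗_{H^*V} E = E / (H̃^*V · E)` with the projection `barπ : E → Ē`. -/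
structure HVModule {d : ℕ} (V : HVSetup d) : Type 1 where
  E : UnstableModule
  [modH : Module V.H E.carrier]
  smul_grading : ∀ (m n : ℕ) (h : V.H) (x : E.carrier),
    h ∈ V.grading m → x ∈ E.grading n → h • x ∈ E.grading (m + n)
  cartan : ∀ (k : ℕ) (h : V.H) (x : E.carrier),
    Sq k • (h • x) = ∑ i ∈ Finset.range (k + 1), (Sq i • h) • (Sq (k - i) • x)
  bar : UnstableModule
  barπ : UnstableHom E bar
  barπ_surj : Function.Surjective barπ.toFun
  barπ_ker : ∀ y : E.carrier, barπ.toFun y = 0 ↔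
    y ∈ Submodule.span (ZMod 2)
      {z : E.carrier | ∃ (m : ℕ) (h : V.H) (x : E.carrier),
        1 ≤ m ∧ h ∈ V.grading m ∧ z = h • x}

attribute [instance] HVModule.modH

/-- Morphisms of `H^*V-U`: `H^*V`-linear and `A`-linear maps of degree zero. -/
structure HVHom {d : ℕ} (V : HVSetup d) (M N : HVModule V) extends UnstableHom M.E N.E where
  map_hsmul : ∀ (h : V.H) (x : M.E.carrier), toFun (h • x) = h • toFun x

/-- `M ≅ N` in the category `H^*V-U`. -/
def HVIso {d : ℕ} {V : HVSetup d} (M N : HVModule V) : Prop :=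
  ∃ (f : HVHom V M N) (g : HVHom V N M),
    (∀ x, g.toFun (f.toFun x) = x) ∧ ∀ y, f.toFun (g.toFun y) = y

/-- `ι : P → T` realizes `T` as `H^*V ⊗ P`, via the universal property: every `A`-linear
map from `P` to an unstable `H^*V`-`A`-module extends uniquely to an `H^*V`-`A`-linear
map from `T`. -/
def IsHVTensor {d : ℕ} (V : HVSetup d) (P : UnstableModule) (T : HVModule V)
    (ι : UnstableHom P T.E) : Prop :=
  ∀ (N : HVModule V) (f : UnstableHom P N.E),
    ∃ g : HVHom V T N, (∀ x, g.toFun (ι.toFun x) = f.toFun x) ∧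
      ∀ g' : HVHom V T N, (∀ x, g'.toFun (ι.toFun x) = f.toFun x) →
        ∀ y, g'.toFun y = g.toFun y

/-- Injective objects of the category `H^*V-U`. -/
def IsInjectiveHVU {d : ℕ} {V : HVSetup d} (I : HVModule V) : Prop :=
  ∀ (M N : HVModule V) (f : HVHom V M N), Function.Injective f.toFun →
    ∀ g : HVHom V M I, ∃ h : HVHom V N I, ∀ x, h.toFun (f.toFun x) = g.toFun x

/-- `i : M ↪ E` exhibits `E` as the injective hull of `M` in `H^*V-U`. -/
def IsInjectiveHullHVU {d : ℕ} {V : HVSetup d} (M E : HVModule V) (i : HVHom V M E) : Prop :=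
  IsInjectiveHVU E ∧ Function.Injective i.toFun ∧
  ∀ p : Submodule SteenrodAlgebra E.E.carrier, IsGradedSub E.E p →
    (∀ (h : V.H) (x : E.E.carrier), x ∈ p → h • x ∈ p) → p ≠ ⊥ →
    ∃ x, x ≠ 0 ∧ x ∈ p ∧ x ∈ Set.range i.toFun

/-- `I` is the direct sum (in `H^*V-U`) of the family `F`. -/
def IsHVDirectSumOf {d : ℕ} {V : HVSetup d} (I : HVModule V) {ι : Type}
    (F : ι → HVModule V) : Prop :=
  letI := Classical.decEq ι
  ∃ j : ∀ i, HVHom V (F i) I,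
    Function.Bijective
      (DirectSum.toModule SteenrodAlgebra ι I.E.carrier fun i => (j i).toFun)

/-- `T` realizes `M ⊗_{F_2} L` in `H^*V-U` (with `H^*V` acting on the first factor). -/
def IsHVTensorWithU {d : ℕ} {V : HVSetup d} (M : HVModule V) (L : UnstableModule)
    (T : HVModule V) : Prop :=
  ∃ β : M.E.carrier →ₗ[ZMod 2] L.carrier →ₗ[ZMod 2] T.E.carrier,
    (∀ (m n : ℕ) (x : M.E.carrier) (y : L.carrier),
      x ∈ M.E.grading m → y ∈ L.grading n → β x y ∈ T.E.grading (m + n)) ∧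
    (∀ (k : ℕ) (x : M.E.carrier) (y : L.carrier),
      Sq k • β x y = ∑ i ∈ Finset.range (k + 1), β (Sq i • x) (Sq (k - i) • y)) ∧
    (∀ (h : V.H) (x : M.E.carrier) (y : L.carrier), β (h • x) y = h • β x y) ∧
    Function.Bijective (TensorProduct.lift β)

/-- A morphism of setups `H^*(V/W) → H^*V` induced by a projection `V → V/W` onto a
quotient by a subgroup `W`: an injective map of unstable `A`-algebras. -/
structure SetupMap {e d : ℕ} (U : HVSetup e) (V : HVSetup d) where
  toHom : UnstableHom U.toUnstable V.toUnstable
  map_one : toHom.toFun 1 = 1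
  map_mul : ∀ x y, toHom.toFun (x * y) = toHom.toFun x * toHom.toFun y
  inj : Function.Injective toHom.toFun

/-- `ι : M → T` realizes `T` as the base change `H^*V ⊗_{H^*(V/W)} M` along
`ρ : H^*(V/W) → H^*V`, via the universal property of extension of scalars. -/
def IsBaseChangeOf {e d : ℕ} {U : HVSetup e} {V : HVSetup d} (ρ : SetupMap U V)
    (M : HVModule U) (T : HVModule V) (ι : UnstableHom M.E T.E) : Prop :=
  (∀ (h : U.H) (x : M.E.carrier), ι.toFun (h • x) = ρ.toHom.toFun h • ι.toFun x) ∧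
  ∀ (N : HVModule V) (f : UnstableHom M.E N.E),
    (∀ (h : U.H) (x : M.E.carrier), f.toFun (h • x) = ρ.toHom.toFun h • f.toFun x) →
    ∃ g : HVHom V T N, (∀ x, g.toFun (ι.toFun x) = f.toFun x) ∧
      ∀ g' : HVHom V T N, (∀ x, g'.toFun (ι.toFun x) = f.toFun x) →
        ∀ y, g'.toFun y = g.toFun y

/-- The Brown-Gitler object `J_V(n)` of `H^*V-U`: it represents `M ↦ (Mⁿ)^∨` on
`H^*V-U`. -/
def IsHVBrownGitler {e : ℕ} (U : HVSetup e) (J : HVModule U) (n : ℕ) : Prop :=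
  ∃ Φ : ∀ M : HVModule U, HVHom U M J → (↥(M.E.grading n) →ₗ[ZMod 2] ZMod 2),
    (∀ M, Function.Bijective (Φ M)) ∧
    ∀ (M M' : HVModule U) (f : HVHom U M' M) (g : HVHom U M J)
      (x : ↥(M'.E.grading n)),
      Φ M' ⟨g.toUnstableHom.comp f.toUnstableHom,
        fun h y => by simp [UnstableHom.comp, f.map_hsmul, g.map_hsmul]⟩ x =
      Φ M g ⟨f.toFun x, f.map_grading n x x.2⟩

/-- The data of `Fix_V N` together with its couniversal property: `Fix_V` is left
adjoint to `H^*V ⊗ -`, and `η : N → H^*V ⊗ Fix_V N` is the unit (the adjoint of the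
identity of `Fix_V N`). -/
structure FixData {d : ℕ} (V : HVSetup d) (N : HVModule V) where
  F : UnstableModule
  T : HVModule V
  ι : UnstableHom F T.E
  tensor : IsHVTensor V F T ι
  η : HVHom V N T
  univ : ∀ (P : UnstableModule) (T' : HVModule V) (ι' : UnstableHom P T'.E),
    IsHVTensor V P T' ι' → ∀ f : HVHom V N T',
    ∃ φ : UnstableHom F P,
      (∀ g : HVHom V T T', (∀ x, g.toFun (ι.toFun x) = ι'.toFun (φ.toFun x)) →
        ∀ y, g.toFun (η.toFun y) = f.toFun y) ∧
      ∀ φ' : UnstableHom F P,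
        (∀ g : HVHom V T T', (∀ x, g.toFun (ι.toFun x) = ι'.toFun (φ'.toFun x)) →
          ∀ y, g.toFun (η.toFun y) = f.toFun y) →
        ∀ z, φ'.toFun z = φ.toFun z

/-- `0 → M → I₀ → I₁` is the beginning of a minimal injective resolution in `U`:
`I₀` is the injective hull of `M` and `I₁` is the injective hull of `I₀/M`. -/
def IsMinResStartU (M I0 I1 : UnstableModule) (e0 : UnstableHom M I0)
    (a : UnstableHom I0 I1) : Prop :=
  IsInjectiveHullU M I0 e0 ∧ IsInjectiveU I1 ∧
  (∀ x, a.toFun x = 0 ↔ x ∈ Set.range e0.toFun) ∧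
  ∀ (C : UnstableModule) (q : UnstableHom I0 C), Function.Surjective q.toFun →
    (∀ x, q.toFun x = 0 ↔ x ∈ Set.range e0.toFun) →
    ∀ a' : UnstableHom C I1, (∀ x, a'.toFun (q.toFun x) = a.toFun x) →
      IsInjectiveHullU C I1 a'

/-- `0 → M → T₀ → T₁` is the beginning of a minimal injective resolution in `H^*V-U`. -/
def IsMinResStartHV {d : ℕ} {V : HVSetup d} (M T0 T1 : HVModule V)
    (e0 : HVHom V M T0) (a : HVHom V T0 T1) : Prop :=
  IsInjectiveHullHVU M T0 e0 ∧ IsInjectiveHVU T1 ∧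
  (∀ x, a.toFun x = 0 ↔ x ∈ Set.range e0.toFun) ∧
  ∀ (C : HVModule V) (q : HVHom V T0 C), Function.Surjective q.toFun →
    (∀ x, q.toFun x = 0 ↔ x ∈ Set.range e0.toFun) →
    ∀ a' : HVHom V C T1, (∀ x, a'.toFun (q.toFun x) = a.toFun x) →
      IsInjectiveHullHVU C T1 a'

/-- `M` is (isomorphic to) the `n`-fold suspension `Σⁿ F_2`: one-dimensional,
concentrated in degree `n`. -/
def IsSphereLike (M : UnstableModule) (n : ℕ) : Prop :=
  (∀ (m : ℕ) (x : M.carrier), x ∈ M.grading m → m ≠ n → x = 0) ∧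
  ∃ x, x ∈ M.grading n ∧ x ≠ 0 ∧ ∀ y ∈ M.grading n, y = 0 ∨ y = x

/-- `SM` realizes the suspension `Σ M` in `U`. -/
def IsSuspensionU (M SM : UnstableModule) : Prop :=
  ∃ s : M.carrier →+ SM.carrier, Function.Bijective s ∧
    (∀ (n : ℕ) (x : M.carrier), x ∈ M.grading n → s x ∈ SM.grading (n + 1)) ∧
    ∀ (k : ℕ) (x : M.carrier), s (Sq k • x) = Sq k • s x

/-- `SM` realizes the suspension `Σ M` in `H^*V-U`. -/
def IsSuspensionHV {d : ℕ} {V : HVSetup d} (M SM : HVModule V) : Prop :=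
  ∃ s : M.E.carrier →+ SM.E.carrier, Function.Bijective s ∧
    (∀ (n : ℕ) (x : M.E.carrier), x ∈ M.E.grading n → s x ∈ SM.E.grading (n + 1)) ∧
    (∀ (k : ℕ) (x : M.E.carrier), s (Sq k • x) = Sq k • s x) ∧
    ∀ (h : V.H) (x : M.E.carrier), s (h • x) = h • s x

/-- `M` realizes `Σ^dd (u · H^*V)`, the `dd`-fold suspension of the principal ideal
generated by a homogeneous element `u` of degree `du` (an unstable `H^*V`-`A`-submodule
of `H^*V` since `u` is a product of linear forms): the witness `f` sends `h` to
`Σ^dd (u·h)`. -/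
def IsSuspensionOfPrincipalIdeal {d : ℕ} (V : HVSetup d) (M : HVModule V)
    (dd du : ℕ) (u : V.H) : Prop :=
  u ∈ V.grading du ∧ u ≠ 0 ∧
  ∃ f : V.H →+ M.E.carrier,
    Function.Bijective f ∧
    (∀ (h h' : V.H), f (h' * h) = h' • f h) ∧
    (∀ (m : ℕ) (h : V.H), h ∈ V.grading m → f h ∈ M.E.grading (dd + du + m)) ∧
    ∀ (k : ℕ) (h h' : V.H), Sq k • (u * h) = u * h' → Sq k • f h = f h'

/-- A `V`-CW-complex, recorded through its mod 2 cohomology `H^*X`, its mod 2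
equivariant cohomology `H^*_V X` (the cohomology of the Borel construction, an
unstable `H^*V`-`A`-module) and the restriction map `H^*_V X → H^*X` to the fibre of
`X → X_{hV} → BV`.  The field `collapse_of_free` records the classical topological
fact that if `H^*_V X` is `H^*V`-free then the Serre spectral sequence collapses, so
that the restriction map identifies `F_2 ⊗_{H^*V} H^*_V X` with `H^*X`. -/
structure VCWComplex {d : ℕ} (V : HVSetup d) : Type 1 where
  cohomology : UnstableModule
  equivariantCohomology : HVModule V
  restriction : UnstableHom equivariantCohomology.E cohomology
  restriction_hsmul : ∀ (m : ℕ) (h : V.H) (x : equivariantCohomology.E.carrier),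
    1 ≤ m → h ∈ V.grading m → restriction.toFun (h • x) = 0
  collapse_of_free : Module.Free V.H equivariantCohomology.E.carrier →
    Function.Surjective restriction.toFun ∧
    ∀ y, restriction.toFun y = 0 ↔ equivariantCohomology.barπ.toFun y = 0

end

/-! ### Auxiliary development -/

noncomputable section Aux

set_option maxHeartbeats 1000000
set_option synthInstance.maxHeartbeats 200000

open DirectSum

lemma Sq_zero_eq_one : Sq 0 = (1 : SteenrodAlgebra) := by
  have h := RingQuot.mkAlgHom_rel (ZMod 2) AdemRel.unit
  simpa [Sq] using h

lemma Sq_zero_smul {α : Type*} [AddCommMonoid α] [Module SteenrodAlgebra α] (x : α) :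
    Sq 0 • x = x := by rw [Sq_zero_eq_one, one_smul]

section Char2

variable {α : Type} [AddCommGroup α] [Module (ZMod 2) α]

lemma char2_add_self (x : α) : x + x = 0 := by
  have h0 : ((1 : ZMod 2) + 1) = 0 := by decide
  have h : ((1 : ZMod 2) + 1) • x = (0 : ZMod 2) • x := by rw [h0]
  simpa [add_smul] using h

lemma char2_rearrange {a b c : α} (h : a = b + c) : b = a + c := by
  rw [h, add_assoc, char2_add_self, add_zero]

lemma char2_rearrange' {a b c : α} (h : a = b + c) : c = a + b := by
  rw [h, add_comm b c, add_assoc, char2_add_self, add_zero]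

lemma zmod2_smul_cases (c : ZMod 2) (x : α) : c • x = 0 ∨ c • x = x := by
  have h : c = 0 ∨ c = 1 := by revert c; decide
  rcases h with h | h <;> subst h <;> simp

end Char2

namespace UnstableModule

variable (M : UnstableModule)

/-- The decomposition equivalence coming from `isInternal`. -/
noncomputable def decEquiv : (⨁ n, M.grading n) ≃+ M.carrier :=
  AddEquiv.ofBijective (DirectSum.coeAddMonoidHom M.grading) M.isInternal

lemma decEquiv_apply (y : ⨁ n, M.grading n) :
    M.decEquiv y = DirectSum.coeAddMonoidHom M.grading y := rfl

/-- Projection onto the degree `n` component. -/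
noncomputable def proj (n : ℕ) (x : M.carrier) : M.carrier :=
  ((M.decEquiv.symm x) n : M.carrier)

lemma proj_mem (n : ℕ) (x : M.carrier) : M.proj n x ∈ M.grading n :=
  ((M.decEquiv.symm x) n).2

lemma proj_add (n : ℕ) (x y : M.carrier) :
    M.proj n (x + y) = M.proj n x + M.proj n y := by
  unfold proj
  rw [map_add, DirectSum.add_apply, Submodule.coe_add]

lemma proj_zero (n : ℕ) : M.proj n (0 : M.carrier) = 0 := by
  unfold proj
  rw [map_zero, DirectSum.zero_apply, ZeroMemClass.coe_zero]

lemma proj_zsmul (n : ℕ) (c : ZMod 2) (x : M.carrier) :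
    M.proj n (c • x) = c • M.proj n x := by
  have h : c = 0 ∨ c = 1 := by revert c; decide
  rcases h with h | h <;> subst h
  · simp [proj_zero]
  · simp

lemma decEquiv_symm_of_mem {a : ℕ} {x : M.carrier} (h : x ∈ M.grading a) :
    M.decEquiv.symm x = DirectSum.of (fun n => M.grading n) a ⟨x, h⟩ := by
  apply M.decEquiv.injective
  rw [AddEquiv.apply_symm_apply, decEquiv_apply, DirectSum.coeAddMonoidHom_of]

lemma proj_of_mem {a : ℕ} {x : M.carrier} (h : x ∈ M.grading a) (n : ℕ) :
    M.proj n x = if a = n then x else 0 := by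
  unfold proj
  rw [M.decEquiv_symm_of_mem h, DirectSum.coe_of_apply]
  split <;> simp

lemma proj_eq_self {a : ℕ} {x : M.carrier} (h : x ∈ M.grading a) : M.proj a x = x := by
  rw [M.proj_of_mem h, if_pos rfl]

lemma proj_eq_zero {a n : ℕ} {x : M.carrier} (h : x ∈ M.grading a) (hn : a ≠ n) :
    M.proj n x = 0 := by
  rw [M.proj_of_mem h, if_neg hn]

lemma proj_sum (n : ℕ) {ι : Type*} (s : Finset ι) (f : ι → M.carrier) :
    M.proj n (∑ b ∈ s, f b) = ∑ b ∈ s, M.proj n (f b) := by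
  classical
  induction s using Finset.induction_on with
  | empty => simp [proj_zero]
  | insert _ _ h ih => rw [Finset.sum_insert h, Finset.sum_insert h, proj_add, ih]

lemma exists_sum_proj (x : M.carrier) :
    ∃ s : Finset ℕ, (∀ b ∉ s, M.proj b x = 0) ∧ x = ∑ b ∈ s, M.proj b x := by
  classical
  refine ⟨(M.decEquiv.symm x).support, fun b hb => ?_, ?_⟩
  · unfold proj
    rw [DFinsupp.notMem_support_iff.mp hb, ZeroMemClass.coe_zero]
  · conv_lhs => rw [← M.decEquiv.apply_symm_apply x,
      ← DirectSum.sum_support_of (M.decEquiv.symm x)]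
    rw [map_sum]
    refine Finset.sum_congr rfl fun b _ => ?_
    rw [decEquiv_apply, DirectSum.coeAddMonoidHom_of]
    rfl

lemma mem_grading_cast {a b : ℕ} (h : a = b) {x : M.carrier} (hx : x ∈ M.grading a) :
    x ∈ M.grading b := h ▸ hx

end UnstableModule

lemma UnstableHom.proj_comm {M N : UnstableModule} (f : UnstableHom M N) (n : ℕ)
    (x : M.carrier) : f.toFun (M.proj n x) = N.proj n (f.toFun x) := by
  classical
  obtain ⟨s, hs0, hs⟩ := M.exists_sum_proj x
  conv_rhs => rw [hs]
  rw [map_sum, N.proj_sum]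
  have hterm : ∀ b ∈ s, N.proj n (f.toFun (M.proj b x)) =
      if b = n then f.toFun (M.proj b x) else 0 := by
    intro b _
    exact N.proj_of_mem (f.map_grading b _ (M.proj_mem b x)) n
  rw [Finset.sum_congr rfl hterm, Finset.sum_ite_eq' s n]
  split
  · rfl
  · next hn => rw [hs0 n hn, map_zero]

/-- `sq0Iter` is additive in the element. -/
lemma sq0Iter_add (M : UnstableModule) (k n : ℕ) (x y : M.carrier) :
    sq0Iter M k n (x + y) = sq0Iter M k n x + sq0Iter M k n y := by
  induction k with
  | zero => rfl
  | succ k ih => rw [sq0Iter, sq0Iter, sq0Iter, ih, smul_add]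

lemma sq0Iter_succ_eq (M : UnstableModule) (k n : ℕ) (x : M.carrier) :
    sq0Iter M (k + 1) n x = sq0Iter M k (2 * n) (Sq n • x) := by
  induction k with
  | zero => show Sq (2 ^ 0 * n) • x = Sq n • x; norm_num
  | succ k ih =>
    show Sq (2 ^ (k+1) * n) • sq0Iter M (k+1) n x
        = Sq (2 ^ k * (2 * n)) • sq0Iter M k (2*n) (Sq n • x)
    rw [ih]
    congr 2
    ring

lemma sq0Iter_mem (M : UnstableModule) (k n : ℕ) {x : M.carrier} (h : x ∈ M.grading n) :
    sq0Iter M k n x ∈ M.grading (2 ^ k * n) := by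
  induction k with
  | zero => show x ∈ M.grading (2 ^ 0 * n); simpa using h
  | succ k ih =>
    show Sq (2 ^ k * n) • sq0Iter M k n x ∈ _
    refine M.mem_grading_cast (by ring) (M.sq_mem (2 ^ k * n) (2 ^ k * n) _ ih)

lemma map_sq0Iter {M N : UnstableModule} (f : UnstableHom M N) (k n : ℕ) (x : M.carrier) :
    f.toFun (sq0Iter M k n x) = sq0Iter N k n (f.toFun x) := by
  induction k with
  | zero => rfl
  | succ k ih => show f.toFun (Sq (2^k*n) • sq0Iter M k n x) = Sq (2^k*n) • sq0Iter N k n (f.toFun x); rw [map_smul, ih]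

end Aux

noncomputable section Aux2

set_option maxHeartbeats 1000000
set_option synthInstance.maxHeartbeats 200000

namespace HVSetup

variable {d : ℕ} (V : HVSetup d)

lemma pow_mem (l : Fin d) (q : ℕ) : V.gens l ^ q ∈ V.grading q := by
  induction q with
  | zero => rw [pow_zero]; exact V.one_mem
  | succ q ih =>
    rw [pow_succ]
    exact V.mul_mem q 1 _ _ ih (V.gens_deg l)

lemma prod_mem (e : Fin d → ℕ) (s : Finset (Fin d)) :
    (∏ i ∈ s, V.gens i ^ e i) ∈ V.grading (∑ i ∈ s, e i) := by
  classical
  induction s using Finset.induction_on with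
  | empty => simpa using V.one_mem
  | insert _ _ h ih =>
    rw [Finset.prod_insert h, Finset.sum_insert h]
    exact V.mul_mem _ _ _ _ (V.pow_mem _ _) ih

lemma grading_cast {a b : ℕ} (h : a = b) {x : V.H} (hx : x ∈ V.grading a) :
    x ∈ V.grading b := h ▸ hx

/-- `Sq₀` on `2^j`-th powers of the generators. -/
lemma sq_pow_two_pow (l : Fin d) (j : ℕ) :
    Sq (2 ^ j) • (V.gens l ^ (2 ^ j)) = V.gens l ^ (2 ^ (j + 1)) := by
  induction j with
  | zero =>
    show Sq 1 • V.gens l ^ 1 = V.gens l ^ 2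
    rw [pow_one, V.sq_one_gen l, pow_two]
  | succ j ih =>
    have hq1 : (1 : ℕ) ≤ 2 ^ j := Nat.one_le_two_pow
    have hsplit : (2 : ℕ) ^ (j + 1) = 2 ^ j + 2 ^ j := by ring
    have hsplit2 : (2 : ℕ) ^ (j + 2) = 2 ^ (j+1) + 2 ^ (j+1) := by ring
    rw [hsplit, pow_add, V.cartanH]
    rw [Finset.sum_eq_single_of_mem (2 ^ j) (by
      simp only [Finset.mem_range]; omega)]
    · rw [show 2 ^ j + 2 ^ j - 2 ^ j = 2 ^ j by omega, ih, ← pow_add, ← hsplit2]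
    · intro b hb hbne
      rcases lt_or_gt_of_ne hbne with hlt | hgt
      · have h2 : Sq (2 ^ j + 2 ^ j - b) • V.gens l ^ (2 ^ j) = 0 :=
          V.instability _ _ _ (V.pow_mem l _) (by omega)
        rw [h2, mul_zero]
      · have h1 : Sq b • V.gens l ^ (2 ^ j) = 0 :=
          V.instability _ _ _ (V.pow_mem l _) hgt
        rw [h1, zero_mul]

/-- Two-term Cartan formula in `H`: `Sq^{j+1}(t·g) = t·Sq^{j+1}g + t·(t·Sq^j g)`. -/
lemma cartanH_gen (l : Fin d) (j : ℕ) (g : V.H) :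
    Sq (j + 1) • (V.gens l * g)
      = V.gens l * (Sq (j + 1) • g) + V.gens l * (V.gens l * (Sq j • g)) := by
  rw [V.cartanH]
  rw [Finset.sum_range_succ', Finset.sum_range_succ']
  have hz : ∀ i ∈ Finset.range j, (Sq (i + 1 + 1) • V.gens l) * (Sq (j + 1 - (i + 1 + 1)) • g) = 0 := by
    intro i _
    rw [V.instability (i + 1 + 1) 1 _ (V.gens_deg l) (by omega), zero_mul]
  rw [Finset.sum_eq_zero hz, zero_add]
  rw [show j + 1 - (0 + 1) = j by omega, Nat.sub_zero]
  rw [V.sq_one_gen l, Sq_zero_smul]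
  rw [mul_assoc]
  abel

end HVSetup

namespace HVModule

variable {d : ℕ} {V : HVSetup d} (Fm : HVModule V)

/-- Two-term Cartan formula in an `H^*V`-`A`-module. -/
lemma cartan_gen_smul (l : Fin d) (j : ℕ) (v : Fm.E.carrier) :
    Sq (j + 1) • (V.gens l • v)
      = V.gens l • (Sq (j + 1) • v) + V.gens l • (V.gens l • (Sq j • v)) := by
  rw [Fm.cartan]
  rw [Finset.sum_range_succ', Finset.sum_range_succ']
  have hz : ∀ i ∈ Finset.range j,
      (Sq (i + 1 + 1) • V.gens l) • (Sq (j + 1 - (i + 1 + 1)) • v) = (0 : Fm.E.carrier) := by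
    intro i _
    rw [V.instability (i + 1 + 1) 1 _ (V.gens_deg l) (by omega), zero_smul]
  rw [Finset.sum_eq_zero hz, zero_add]
  rw [show j + 1 - (0 + 1) = j by omega, Nat.sub_zero]
  rw [V.sq_one_gen l, Sq_zero_smul, mul_smul]
  abel

/-- Semilinearity of iterated `Sq₀` with respect to multiplication by a generator. -/
lemma semilin (l : Fin d) (k b : ℕ) {z : Fm.E.carrier} (hz : z ∈ Fm.E.grading b) :
    sq0Iter Fm.E k (b + 1) (V.gens l • z)
      = (V.gens l ^ (2 ^ k)) • sq0Iter Fm.E k b z := by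
  induction k with
  | zero => show V.gens l • z = V.gens l ^ 1 • z; rw [pow_one]
  | succ k ih =>
    have hq1 : (1 : ℕ) ≤ 2 ^ k := Nat.one_le_two_pow
    have hZ : sq0Iter Fm.E k b z ∈ Fm.E.grading (2 ^ k * b) := sq0Iter_mem Fm.E k b hz
    show Sq (2 ^ k * (b + 1)) • sq0Iter Fm.E k (b + 1) (V.gens l • z) = _
    rw [ih, Fm.cartan]
    have harith : 2 ^ k * (b + 1) = 2 ^ k * b + 2 ^ k := by ring
    rw [Finset.sum_eq_single_of_mem (2 ^ k) (by simp only [Finset.mem_range]; omega)]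
    · rw [show 2 ^ k * (b + 1) - 2 ^ k = 2 ^ k * b by omega]
      rw [V.sq_pow_two_pow l k]
      rfl
    · intro i hi hine
      rcases lt_or_gt_of_ne hine with hlt | hgt
      · rw [Fm.E.instability (2 ^ k * (b + 1) - i) (2 ^ k * b) _ hZ (by omega), smul_zero]
      · rw [V.instability i (2 ^ k) _ (V.pow_mem l _) hgt, zero_smul]

end HVModule

end Aux2

noncomputable section Aux3

set_option maxHeartbeats 1000000
set_option synthInstance.maxHeartbeats 200000

namespace HVModule

variable {d : ℕ} {V : HVSetup d} (Fm : HVModule V)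

/-- The submodule of `F` spanned by `t_l·g·z`, `l < r`, with `g`, `z` homogeneous. -/
def Pmod (r : ℕ) : Submodule (ZMod 2) Fm.E.carrier :=
  Submodule.span (ZMod 2)
    {w | ∃ l : Fin d, l.1 < r ∧ ∃ (a b : ℕ) (g : V.H) (z : Fm.E.carrier),
      g ∈ V.grading a ∧ z ∈ Fm.E.grading b ∧ w = (V.gens l * g) • z}

/-- `H̃ · M` for a sub-`ZMod 2`-module `M` of `F`. -/
def IMod (M : Submodule (ZMod 2) Fm.E.carrier) : Submodule (ZMod 2) Fm.E.carrier :=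
  Submodule.span (ZMod 2)
    {w | ∃ (m : ℕ) (h : V.H) (z : Fm.E.carrier),
      1 ≤ m ∧ h ∈ V.grading m ∧ z ∈ M ∧ w = h • z}

variable {Fm}

lemma Pmod_mono {r r' : ℕ} (h : r ≤ r') : Pmod Fm r ≤ Pmod Fm r' := by
  apply Submodule.span_mono
  rintro w ⟨l, hl, rest⟩
  exact ⟨l, lt_of_lt_of_le hl h, rest⟩

lemma Pmod_ge_d {r : ℕ} (h : d ≤ r) : Pmod Fm (r + 1) ≤ Pmod Fm r := by
  apply Submodule.span_mono
  rintro w ⟨l, _, rest⟩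
  exact ⟨l, lt_of_lt_of_le l.isLt h, rest⟩

lemma Pmod_proj {r n : ℕ} {x : Fm.E.carrier} (hx : x ∈ Pmod Fm r) :
    Fm.E.proj n x ∈ Pmod Fm r := by
  induction hx using Submodule.span_induction with
  | mem w hw =>
    obtain ⟨l, hl, a, b, g, z, hg, hz, rfl⟩ := hw
    have hmem : (V.gens l * g) • z ∈ Fm.E.grading (1 + a + b) :=
      Fm.smul_grading (1 + a) b _ _ (V.mul_mem 1 a _ _ (V.gens_deg l) hg) hz
    rw [Fm.E.proj_of_mem hmem n]
    split
    · exact Submodule.subset_span ⟨l, hl, a, b, g, z, hg, hz, rfl⟩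
    · exact zero_mem _
  | zero => rw [Fm.E.proj_zero]; exact zero_mem _
  | add x y hx hy ihx ihy => rw [Fm.E.proj_add]; exact add_mem ihx ihy
  | smul c x hx ih => rw [Fm.E.proj_zsmul]; exact Submodule.smul_mem _ _ ih

lemma Pmod_proj_zero {r : ℕ} {x : Fm.E.carrier} (hx : x ∈ Pmod Fm r) :
    Fm.E.proj 0 x = 0 := by
  induction hx using Submodule.span_induction with
  | mem w hw =>
    obtain ⟨l, hl, a, b, g, z, hg, hz, rfl⟩ := hw
    have hmem : (V.gens l * g) • z ∈ Fm.E.grading (1 + a + b) :=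
      Fm.smul_grading (1 + a) b _ _ (V.mul_mem 1 a _ _ (V.gens_deg l) hg) hz
    exact Fm.E.proj_eq_zero hmem (by omega)
  | zero => exact Fm.E.proj_zero 0
  | add x y hx hy ihx ihy => rw [Fm.E.proj_add, ihx, ihy, add_zero]
  | smul c x hx ih => rw [Fm.E.proj_zsmul, ih, smul_zero]

lemma Pmod_gensmul {r : ℕ} (l : Fin d) {x : Fm.E.carrier} (hx : x ∈ Pmod Fm r) :
    V.gens l • x ∈ Pmod Fm r := by
  induction hx using Submodule.span_induction with
  | mem w hw =>
    obtain ⟨l', hl', a, b, g, z, hg, hz, rfl⟩ := hw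
    have heq : V.gens l • ((V.gens l' * g) • z) = (V.gens l' * (g * V.gens l)) • z := by
      rw [← mul_smul]
      congr 1
      ring
    rw [heq]
    exact Submodule.subset_span
      ⟨l', hl', a + 1, b, g * V.gens l, z, V.mul_mem a 1 _ _ hg (V.gens_deg l), hz, rfl⟩
  | zero => rw [smul_zero]; exact zero_mem _
  | add x y hx hy ihx ihy => rw [smul_add]; exact add_mem ihx ihy
  | smul c x hx ih =>
    rcases zmod2_smul_cases c x with h | h <;> rw [h]
    · rw [smul_zero]; exact zero_mem _
    · exact ih

lemma Pmod_sq {r k : ℕ} {x : Fm.E.carrier} (hx : x ∈ Pmod Fm r) :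
    Sq k • x ∈ Pmod Fm r := by
  induction hx using Submodule.span_induction with
  | mem w hw =>
    obtain ⟨l, hl, a, b, g, z, hg, hz, rfl⟩ := hw
    rw [Fm.cartan]
    refine Submodule.sum_mem _ fun i _ => ?_
    have hzi : Sq (k - i) • z ∈ Fm.E.grading (b + (k - i)) := Fm.E.sq_mem _ _ _ hz
    cases i with
    | zero =>
      rw [Sq_zero_smul]
      exact Submodule.subset_span ⟨l, hl, a, b + (k - 0), g, _, hg, hzi, rfl⟩
    | succ i =>
      rw [V.cartanH_gen l i g, add_smul]
      refine add_mem ?_ ?_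
      · exact Submodule.subset_span
          ⟨l, hl, a + (i + 1), b + (k - (i+1)), Sq (i+1) • g, _, V.sq_mem _ _ _ hg, hzi, rfl⟩
      · refine Submodule.subset_span
          ⟨l, hl, 1 + (a + i), b + (k - (i+1)), V.gens l * (Sq i • g), _,
            V.mul_mem 1 (a + i) _ _ (V.gens_deg l) (V.sq_mem _ _ _ hg), hzi, rfl⟩
  | zero => rw [smul_zero]; exact zero_mem _
  | add x y hx hy ihx ihy => rw [smul_add]; exact add_mem ihx ihy
  | smul c x hx ih =>
    rcases zmod2_smul_cases c x with h | h <;> rw [h]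
    · rw [smul_zero]; exact zero_mem _
    · exact ih

lemma Pmod_split {r : ℕ} (hr : r < d) {x : Fm.E.carrier} (hx : x ∈ Pmod Fm (r + 1)) :
    ∃ v w, w ∈ Pmod Fm r ∧ x = V.gens ⟨r, hr⟩ • v + w := by
  induction hx using Submodule.span_induction with
  | mem w hw =>
    obtain ⟨l, hl, a, b, g, z, hg, hz, rfl⟩ := hw
    rcases Nat.lt_succ_iff_lt_or_eq.mp hl with hl' | hl'
    · exact ⟨0, _, Submodule.subset_span ⟨l, hl', a, b, g, z, hg, hz, rfl⟩,
        by rw [smul_zero, zero_add]⟩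
    · have : l = ⟨r, hr⟩ := Fin.ext hl'
      subst this
      exact ⟨g • z, 0, zero_mem _, by rw [mul_smul, add_zero]⟩
  | zero => exact ⟨0, 0, zero_mem _, by rw [smul_zero, add_zero]⟩
  | add x y hx hy ihx ihy =>
    obtain ⟨v1, w1, hw1, h1⟩ := ihx
    obtain ⟨v2, w2, hw2, h2⟩ := ihy
    exact ⟨v1 + v2, w1 + w2, add_mem hw1 hw2, by rw [h1, h2, smul_add]; abel⟩
  | smul c x hx ih =>
    obtain ⟨v, w, hw, hvw⟩ := ih
    rcases zmod2_smul_cases c x with h | h <;> rw [h]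
    · exact ⟨0, 0, zero_mem _, by rw [smul_zero, add_zero]⟩
    · exact ⟨v, w, hw, hvw⟩

/-- Projection of a generator-multiple: `proj_{n+1}(t·x) = t·proj_n x`. -/
lemma proj_gensmul (l : Fin d) (n : ℕ) (x : Fm.E.carrier) :
    Fm.E.proj (n + 1) (V.gens l • x) = V.gens l • Fm.E.proj n x := by
  classical
  obtain ⟨s, hs0, hs⟩ := Fm.E.exists_sum_proj x
  conv_lhs => rw [hs]
  rw [Finset.smul_sum, Fm.E.proj_sum]
  have hterm : ∀ b ∈ s, Fm.E.proj (n + 1) (V.gens l • Fm.E.proj b x)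
      = if b = n then V.gens l • Fm.E.proj b x else 0 := by
    intro b _
    have hmem : V.gens l • Fm.E.proj b x ∈ Fm.E.grading (1 + b) :=
      Fm.smul_grading 1 b _ _ (V.gens_deg l) (Fm.E.proj_mem b x)
    rw [Fm.E.proj_of_mem hmem (n + 1)]
    by_cases hbn : b = n
    · subst hbn; rw [if_pos (by omega), if_pos rfl]
    · rw [if_neg (by omega), if_neg hbn]
  rw [Finset.sum_congr rfl hterm, Finset.sum_ite_eq' s n]
  split
  · rfl
  · next hn => rw [hs0 n hn, smul_zero]

end HVModule

end Aux3

noncomputable section Aux4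

set_option maxHeartbeats 2000000
set_option synthInstance.maxHeartbeats 200000

namespace HVModule

variable {d : ℕ} {V : HVSetup d} {Fm : HVModule V}

/-- Key nilpotency lemma: if `c` is a homogeneous element of a graded `A`-stable,
`H^*V`-stable submodule `M` of `F` lying in `H̃·F`, then some iterate of `Sq₀`
takes `c` into `H̃·M`. -/
lemma key (M : Submodule (ZMod 2) Fm.E.carrier)
    (hMsq : ∀ (k : ℕ) (a : Fm.E.carrier), a ∈ M → Sq k • a ∈ M)
    (hMh : ∀ (h : V.H) (a : Fm.E.carrier), a ∈ M → h • a ∈ M)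
    (hMproj : ∀ (n : ℕ) (a : Fm.E.carrier), a ∈ M → Fm.E.proj n a ∈ M) :
    ∀ (r D : ℕ) (c : Fm.E.carrier), c ∈ M → c ∈ Pmod Fm r → c ∈ Fm.E.grading D →
      ∃ k, sq0Iter Fm.E k D c ∈ IMod Fm M := by
  have hMiter : ∀ (k n : ℕ) (a : Fm.E.carrier), a ∈ M → sq0Iter Fm.E k n a ∈ M := by
    intro k n a ha
    induction k with
    | zero => exact ha
    | succ k ih => exact hMsq _ _ ih
  intro r
  induction r with
  | zero =>
    intro D c _ hcP _
    have hc0 : c = 0 := by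
      have : Pmod Fm 0 ≤ ⊥ := by
        rw [Pmod, ← Submodule.span_empty (R := ZMod 2) (M := Fm.E.carrier)]
        apply Submodule.span_mono
        rintro w ⟨l, hl, -⟩
        exact absurd hl (Nat.not_lt_zero _)
      simpa using this hcP
    exact ⟨0, by rw [hc0]; exact zero_mem _⟩
  | succ r IH =>
    intro D c hcM hcP hcD
    by_cases hrd : d ≤ r
    · exact IH D c hcM (Pmod_ge_d hrd hcP) hcD
    push_neg at hrd
    set t : V.H := V.gens ⟨r, hrd⟩ with ht
    cases D with
    | zero =>
      have hc0 : c = 0 := by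
        have h1 : Fm.E.proj 0 c = c := Fm.E.proj_eq_self hcD
        rw [Pmod_proj_zero hcP] at h1
        exact h1.symm
      exact ⟨0, by rw [hc0]; exact zero_mem _⟩
    | succ e =>
      obtain ⟨v₀, w₀', hw₀'P, hdec⟩ := Pmod_split hrd hcP
      set v : Fm.E.carrier := Fm.E.proj e v₀ with hv
      set w₀ : Fm.E.carrier := Fm.E.proj (e + 1) w₀' with hw₀
      have hvmem : v ∈ Fm.E.grading e := Fm.E.proj_mem e v₀
      have hw₀mem : w₀ ∈ Fm.E.grading (e + 1) := Fm.E.proj_mem (e + 1) w₀'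
      have hw₀P : w₀ ∈ Pmod Fm r := Pmod_proj hw₀'P
      have hveq : c = t • v + w₀ := by
        have h1 := congrArg (Fm.E.proj (e + 1)) hdec
        rwa [Fm.E.proj_eq_self hcD, Fm.E.proj_add, proj_gensmul] at h1
      have htv : t • v = c + w₀ := char2_rearrange hveq
      -- the chain of relations coming from `A`-stability:
      have chain : ∀ j : ℕ, ∃ z w, z ∈ M ∧ w ∈ Pmod Fm r ∧ t • (Sq j • v) = z + w := by
        intro j
        induction j with
        | zero => exact ⟨c, w₀, hcM, hw₀P, by rw [Sq_zero_smul]; exact htv⟩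
        | succ j hj =>
          obtain ⟨z, w, hz, hw, hzw⟩ := hj
          refine ⟨Sq (j + 1) • c + t • z, Sq (j + 1) • w₀ + t • w,
            add_mem (hMsq _ _ hcM) (hMh _ _ hz),
            add_mem (Pmod_sq hw₀P) (Pmod_gensmul _ hw), ?_⟩
          have h2 : t • (Sq (j + 1) • v)
              = Sq (j + 1) • (t • v) + t • (t • (Sq j • v)) :=
            char2_rearrange (cartan_gen_smul Fm ⟨r, hrd⟩ j v)
          rw [h2, htv, hzw, smul_add, smul_add]
          abel
      obtain ⟨z₀, w₁₀, hz₀M, hw₁₀P, hchain⟩ := chain e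
      set z : Fm.E.carrier := Fm.E.proj (1 + (e + e)) z₀ with hz
      set w₁ : Fm.E.carrier := Fm.E.proj (1 + (e + e)) w₁₀ with hw₁
      have hdeg : t • (Sq e • v) ∈ Fm.E.grading (1 + (e + e)) :=
        Fm.smul_grading 1 (e + e) _ _ (V.gens_deg _) (Fm.E.sq_mem e e v hvmem)
      have heq2 : t • (Sq e • v) = z + w₁ := by
        have h1 := congrArg (Fm.E.proj (1 + (e + e))) hchain
        rwa [Fm.E.proj_eq_self hdeg, Fm.E.proj_add] at h1
      have hzM : z ∈ M := hMproj _ _ hz₀M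
      have hzg : z ∈ Fm.E.grading (1 + (e + e)) := Fm.E.proj_mem _ _
      have hw₁P : w₁ ∈ Pmod Fm r := Pmod_proj hw₁₀P
      -- the main equation
      have hsq : Sq (e + 1) • c = t • z + (t • w₁ + Sq (e + 1) • w₀) := by
        conv_lhs => rw [hveq]
        rw [smul_add, cartan_gen_smul Fm ⟨r, hrd⟩ e v,
          Fm.E.instability (e + 1) e v hvmem (by omega), smul_zero, zero_add,
          heq2, smul_add]
        abel
      set c' : Fm.E.carrier := t • w₁ + Sq (e + 1) • w₀ with hc'
      have hc'M : c' ∈ M := by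
        have h3 : c' = Sq (e + 1) • c + t • z := char2_rearrange' hsq
        rw [h3]
        exact add_mem (hMsq _ _ hcM) (hMh _ _ hzM)
      have hc'P : c' ∈ Pmod Fm r := add_mem (Pmod_gensmul _ hw₁P) (Pmod_sq hw₀P)
      have hc'g : c' ∈ Fm.E.grading (2 * (e + 1)) := by
        refine add_mem ?_ ?_
        · exact Fm.E.mem_grading_cast (by omega)
            (Fm.smul_grading 1 (1 + (e + e)) _ _ (V.gens_deg _) (Fm.E.proj_mem _ _))
        · exact Fm.E.mem_grading_cast (by omega) (Fm.E.sq_mem (e + 1) (e + 1) w₀ hw₀mem)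
      obtain ⟨k', hk'⟩ := IH (2 * (e + 1)) c' hc'M hc'P hc'g
      refine ⟨k' + 1, ?_⟩
      rw [sq0Iter_succ_eq, hsq, sq0Iter_add]
      refine add_mem ?_ hk'
      rw [show 2 * (e + 1) = (1 + (e + e)) + 1 by omega]
      rw [semilin Fm ⟨r, hrd⟩ k' (1 + (e + e)) hzg]
      exact Submodule.subset_span
        ⟨2 ^ k', t ^ (2 ^ k'), sq0Iter Fm.E k' (1 + (e + e)) z,
          Nat.one_le_two_pow, V.pow_mem _ _, hMiter _ _ _ hzM, rfl⟩

end HVModule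

end Aux4

noncomputable section Aux5

set_option maxHeartbeats 2000000
set_option synthInstance.maxHeartbeats 200000

namespace HVModule

variable {d : ℕ} {V : HVSetup d} {Fm : HVModule V}

/-- A monomial of positive total degree times anything lies in `Pmod d`. -/
lemma mono_smul_mem_Pmod (e : Fin d → ℕ) (hme : 1 ≤ ∑ i, e i) (x : Fm.E.carrier) :
    (∏ i, V.gens i ^ e i) • x ∈ Pmod Fm d := by
  classical
  obtain ⟨l, _, hl⟩ : ∃ l ∈ Finset.univ, e l ≠ 0 := by
    by_contra hc
    push_neg at hc
    rw [Finset.sum_eq_zero (fun i hi => hc i hi)] at hme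
    omega
  have hpow : V.gens l ^ (e l) = V.gens l * V.gens l ^ (e l - 1) := by
    conv_lhs => rw [show e l = (e l - 1) + 1 by omega]
    rw [pow_succ']
  have hsplit : (∏ i, V.gens i ^ e i)
      = V.gens l * ((V.gens l ^ (e l - 1)) * ∏ i ∈ Finset.univ.erase l, V.gens i ^ e i) := by
    rw [← Finset.mul_prod_erase Finset.univ _ (Finset.mem_univ l), hpow, mul_assoc]
  set g : V.H := (V.gens l ^ (e l - 1)) * ∏ i ∈ Finset.univ.erase l, V.gens i ^ e i with hgdef
  have hg : g ∈ V.grading ((e l - 1) + ∑ i ∈ Finset.univ.erase l, e i) :=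
    V.mul_mem _ _ _ _ (V.pow_mem l _) (V.prod_mem e _)
  obtain ⟨s, _, hsx⟩ := Fm.E.exists_sum_proj x
  rw [hsplit]
  have hx2 : (V.gens l * g) • x = ∑ b ∈ s, (V.gens l * g) • Fm.E.proj b x := by
    conv_lhs => rw [hsx]
    rw [Finset.smul_sum]
  rw [hx2]
  refine Submodule.sum_mem _ fun b _ => ?_
  exact Submodule.subset_span
    ⟨l, l.isLt, _, b, g, Fm.E.proj b x, hg, Fm.E.proj_mem b x, rfl⟩

/-- A positive-degree homogeneous element of `H^*V` times anything lies in `Pmod d`. -/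
lemma homog_smul_mem_Pmod {m : ℕ} (hm : 1 ≤ m) {h : V.H} (hh : h ∈ V.grading m)
    (x : Fm.E.carrier) : h • x ∈ Pmod Fm d := by
  classical
  have hspan : h ∈ Submodule.span (ZMod 2)
      (Set.range fun e : Fin d → ℕ => ∏ i, V.gens i ^ e i) :=
    V.monomial_span Submodule.mem_top
  obtain ⟨cf, hcf⟩ := Finsupp.mem_span_range_iff_exists_finsupp.mp hspan
  rw [Finsupp.sum] at hcf
  -- project the monomial expansion to degree `m`
  have hexp : h = ∑ e ∈ cf.support,
      cf e • (if m = ∑ i, e i then (∏ i, V.gens i ^ e i) else 0) := by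
    have h1 := congrArg (V.toUnstable.proj m) hcf
    rw [V.toUnstable.proj_eq_self hh, V.toUnstable.proj_sum] at h1
    rw [← h1]
    refine Finset.sum_congr rfl fun e _ => ?_
    rw [V.toUnstable.proj_zsmul]
    congr 1
    rw [V.toUnstable.proj_of_mem (V.prod_mem e Finset.univ) m]
    split
    · next hco => rw [if_pos hco.symm]
    · next hco => rw [if_neg (fun hx => hco hx.symm)]
  have hx2 : h • x = ∑ e ∈ cf.support,
      cf e • ((if m = ∑ i, e i then (∏ i, V.gens i ^ e i) else 0) • x) := by
    conv_lhs => rw [hexp]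
    rw [Finset.sum_smul]
    refine Finset.sum_congr rfl fun e _ => ?_
    have hce : cf e = 0 ∨ cf e = 1 := by
      have : ∀ c : ZMod 2, c = 0 ∨ c = 1 := by decide
      exact this _
    rcases hce with hc | hc <;> rw [hc] <;> simp
  rw [hx2]
  refine Submodule.sum_mem _ fun e _ => ?_
  refine Submodule.smul_mem _ _ ?_
  split
  · next hco => exact mono_smul_mem_Pmod e (by omega) x
  · rw [zero_smul]; exact zero_mem _

end HVModule

end Aux5

set_option maxHeartbeats 2000000
set_option synthInstance.maxHeartbeats 200000
set_option linter.unusedVariables false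

/-- Proposition 2.1.1.  For every unstable `H^*V`-`A`-module `N`, the
unstable `A`-module `Tor₁^{H^*V}(F_2, N)` is nilpotent.  Here `Tor₁^{H^*V}(F_2, N)` is
computed, as usual, from any presentation `0 → K → F → N → 0` with `F` a free
`H^*V`-module: it is the kernel of the induced map `K̄ → F̄` of the quotients
`(-) ⊗_{H^*V} F_2`.  The statement says that every homogeneous element of this kernel
is killed by some iterate of `Sq₀`. -/
theorem tor_one_is_nilpotent {d : ℕ} (V : HVSetup d) (N K F : HVModule V)
    (i : HVHom V K F) (p : HVHom V F N)
    (hi : Function.Injective i.toFun) (hp : Function.Surjective p.toFun)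
    (hexact : ∀ x, p.toFun x = 0 ↔ x ∈ Set.range i.toFun)
    (hfree : Module.Free V.H F.E.carrier)
    (ibar : UnstableHom K.bar F.bar)
    (hibar : ∀ x, ibar.toFun (K.barπ.toFun x) = F.barπ.toFun (i.toFun x)) :
    ∀ (n : ℕ) (x : K.bar.carrier), x ∈ K.bar.grading n → ibar.toFun x = 0 →
      ∃ k, sq0Iter K.bar k n x = 0 := by
  classical
  intro n x hx hib
  have hzmod : ∀ c : ZMod 2, c = 0 ∨ c = 1 := by decide
  -- choose a homogeneous lift `y` of `x` along `barπ`
  obtain ⟨y₀, hy₀⟩ := K.barπ_surj x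
  set y : K.E.carrier := K.E.proj n y₀ with hy
  have hyg : y ∈ K.E.grading n := K.E.proj_mem n y₀
  have hyx : K.barπ.toFun y = x := by
    rw [hy, UnstableHom.proj_comm K.barπ n y₀, hy₀, K.bar.proj_eq_self hx]
  -- `i y` lies in `H̃·F`
  have hbar0 : F.barπ.toFun (i.toFun y) = 0 := by rw [← hibar, hyx, hib]
  have hiS := (F.barπ_ker _).mp hbar0
  have hiP : i.toFun y ∈ HVModule.Pmod F d := by
    refine Submodule.span_le.mpr ?_ hiS
    rintro w ⟨m, h, x', hm, hh, rfl⟩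
    exact HVModule.homog_smul_mem_Pmod hm hh x'
  -- the image of `K` in `F` as a `ZMod 2`-submodule
  let Mr : Submodule (ZMod 2) F.E.carrier :=
    { carrier := Set.range i.toFun
      add_mem' := by rintro _ _ ⟨a, rfl⟩ ⟨b, rfl⟩; exact ⟨a + b, map_add _ a b⟩
      zero_mem' := ⟨0, map_zero _⟩
      smul_mem' := by
        rintro c _ ⟨a, rfl⟩
        rcases hzmod c with hc | hc <;> subst hc
        · exact ⟨0, by rw [map_zero, zero_smul]⟩
        · exact ⟨a, by rw [one_smul]⟩ }
  have hMsq : ∀ (k : ℕ) (a : F.E.carrier), a ∈ Mr → Sq k • a ∈ Mr := by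
    rintro k _ ⟨a, rfl⟩
    exact ⟨Sq k • a, map_smul i.toFun (Sq k) a⟩
  have hMh : ∀ (h : V.H) (a : F.E.carrier), a ∈ Mr → h • a ∈ Mr := by
    rintro h _ ⟨a, rfl⟩
    exact ⟨h • a, i.map_hsmul h a⟩
  have hMproj : ∀ (m : ℕ) (a : F.E.carrier), a ∈ Mr → F.E.proj m a ∈ Mr := by
    rintro m _ ⟨a, rfl⟩
    exact ⟨K.E.proj m a, UnstableHom.proj_comm i.toUnstableHom m a⟩
  have hiM : i.toFun y ∈ Mr := ⟨y, rfl⟩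
  have hig : i.toFun y ∈ F.E.grading n := i.map_grading n y hyg
  -- apply the key lemma
  obtain ⟨k, hk⟩ := HVModule.key Mr hMsq hMh hMproj d n (i.toFun y) hiM hiP hig
  -- transfer back to `K`
  set JK : Submodule (ZMod 2) K.E.carrier := Submodule.span (ZMod 2)
    {z : K.E.carrier | ∃ (m : ℕ) (h : V.H) (x : K.E.carrier),
      1 ≤ m ∧ h ∈ V.grading m ∧ z = h • x} with hJK
  let i2 : K.E.carrier →ₗ[ZMod 2] F.E.carrier :=
    { toFun := i.toFun
      map_add' := fun a b => map_add _ a b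
      map_smul' := by
        intro c a
        rcases hzmod c with hc | hc <;> subst hc
        · show i.toFun ((0 : ZMod 2) • a) = (0 : ZMod 2) • i.toFun a
          rw [zero_smul (ZMod 2) a, zero_smul (ZMod 2) (i.toFun a), map_zero]
        · show i.toFun ((1 : ZMod 2) • a) = (1 : ZMod 2) • i.toFun a
          rw [one_smul, one_smul] }
  have hIMmap : HVModule.IMod F Mr ≤ Submodule.map i2 JK := by
    rw [HVModule.IMod]
    apply Submodule.span_le.mpr
    rintro _ ⟨m, h, _, hm, hh, ⟨a, rfl⟩, rfl⟩
    exact ⟨h • a, Submodule.subset_span ⟨m, h, a, hm, hh, rfl⟩, i.map_hsmul h a⟩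
  obtain ⟨w, hwJK, hwi⟩ := hIMmap hk
  have hw_eq : w = sq0Iter K.E k n y := by
    apply hi
    rw [show i.toFun w = i2 w from rfl, hwi, ← map_sq0Iter i.toUnstableHom k n y]
  have hfin : K.barπ.toFun (sq0Iter K.E k n y) = 0 :=
    (K.barπ_ker _).mpr (hw_eq ▸ hwJK)
  refine ⟨k, ?_⟩
  rw [← hyx, ← map_sq0Iter K.barπ k n y]
  exact hfin
end

section
/- An unstable A-module is reduced (i.e. the map Sq_0: x ↦ Sq^{|x|} x is injective) if and only if it contains no non-trivial nilpotent unstable A-submodule. -/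
noncomputable section AuxProof

namespace RedAux

lemma sq_zero_eq_one : Sq 0 = (1 : SteenrodAlgebra) := by
  have h := RingQuot.mkAlgHom_rel (ZMod 2) AdemRel.unit
  simpa [Sq] using h

lemma adem_eq (a b : ℕ) (ha : 0 < a) (hab : a < 2 * b) :
    Sq a * Sq b = ∑ c ∈ Finset.range (a / 2 + 1),
      ((Nat.choose (b - c - 1) (a - 2 * c) : ZMod 2)) • (Sq (a + b - c) * Sq c) := by
  have h := RingQuot.mkAlgHom_rel (ZMod 2) (AdemRel.adem a b ha hab)
  simpa [Sq, map_sum, map_mul, map_smul] using h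

variable (M : UnstableModule)

lemma smul_comm' (c : ZMod 2) (a : SteenrodAlgebra) (z : M.carrier) :
    a • (c • z) = c • (a • z) := by
  rw [← algebraMap_smul SteenrodAlgebra c z, ← mul_smul, ← Algebra.commutes, mul_smul,
    algebraMap_smul]

/-- Key Adem-type computation: if `Sq |z| z = 0` then `Sq |Sq i z| (Sq i z) = 0`. -/
lemma key (m i : ℕ) (z : M.carrier) (hz : z ∈ M.grading m) (h0 : Sq m • z = 0) :
    Sq (m + i) • (Sq i • z) = 0 := by
  rcases Nat.eq_zero_or_pos i with rfl | hi
  · rw [sq_zero_eq_one, one_smul]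
    simpa using h0
  rcases lt_trichotomy i m with him | him | him
  · -- 0 < i < m : use the Adem relation for Sq^{2i} Sq^m
    have h1 : (Sq (2 * i) * Sq m) • z = 0 := by rw [mul_smul, h0, smul_zero]
    rw [adem_eq (2 * i) m (by omega) (by omega)] at h1
    rw [Finset.sum_smul] at h1
    simp_rw [smul_assoc] at h1
    have hdiv : 2 * i / 2 = i := by omega
    have h2 : ∀ c ∈ Finset.range (2 * i / 2 + 1), c ≠ i →
        ((Nat.choose (m - c - 1) (2 * i - 2 * c) : ZMod 2)) •
          ((Sq (2 * i + m - c) * Sq c) • z) = 0 := by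
      intro c hc hne
      rw [hdiv] at hc
      have hci : c < i := by
        have := Finset.mem_range.mp hc; omega
      rw [mul_smul]
      rw [M.instability (2 * i + m - c) (m + c) (Sq c • z) (M.sq_mem c m z hz) (by omega)]
      simp
    rw [Finset.sum_eq_single_of_mem i (by rw [hdiv]; exact Finset.self_mem_range_succ i) h2]
      at h1
    have hco : ((Nat.choose (m - i - 1) (2 * i - 2 * i) : ZMod 2)) = 1 := by
      simp
    rw [hco, one_smul, mul_smul] at h1
    have : 2 * i + m - i = m + i := by omega
    rwa [this] at h1
  · subst him
    rw [h0, smul_zero]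
  · rw [M.instability i m z hz him, smul_zero]

/-- projection onto the degree-`m` part -/
def proj (m : ℕ) : M.carrier →ₗ[ZMod 2] M.carrier :=
  (M.grading m).subtype ∘ₗ (DirectSum.component (ZMod 2) ℕ (fun n => ↥(M.grading n)) m) ∘ₗ
    (LinearEquiv.ofBijective (DirectSum.coeLinearMap M.grading) M.isInternal).symm.toLinearMap

lemma proj_of_mem_same {m : ℕ} {z : M.carrier} (hz : z ∈ M.grading m) :
    proj M m z = z := by
  simp only [proj, LinearMap.comp_apply, LinearEquiv.coe_toLinearMap]
  have := M.isInternal.ofBijective_coeLinearMap_of_mem hz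
  simp [DirectSum.component, DFinsupp.lapply, this]

lemma proj_of_mem_ne {m m' : ℕ} (h : m' ≠ m) {z : M.carrier} (hz : z ∈ M.grading m') :
    proj M m z = 0 := by
  simp only [proj, LinearMap.comp_apply, LinearEquiv.coe_toLinearMap]
  have := M.isInternal.ofBijective_coeLinearMap_of_mem_ne h hz
  simp [DirectSum.component, DFinsupp.lapply, this]

lemma adjoin_sq_top : Algebra.adjoin (ZMod 2) (Set.range Sq) = ⊤ := by
  have hsur : Function.Surjective (RingQuot.mkAlgHom (ZMod 2) AdemRel) :=
    RingQuot.mkAlgHom_surjective (ZMod 2) AdemRel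
  have : Set.range Sq = (RingQuot.mkAlgHom (ZMod 2) AdemRel) '' (Set.range (FreeAlgebra.ι (ZMod 2))) := by
    rw [← Set.range_comp]; rfl
  rw [this, ← AlgHom.map_adjoin, FreeAlgebra.adjoin_range_ι, Algebra.map_top]
  rw [AlgHom.range_eq_top]
  exact hsur

/-- Every element of the `A`-span of `x` (where `Sq |x| x = 0`) lies in the
`F₂`-span of the set of homogeneous `Sq₀`-killed elements of that span. -/
lemma span_action (x : M.carrier) (n : ℕ) (hx : x ∈ M.grading n) (h0 : Sq n • x = 0)
    (a : SteenrodAlgebra) : a • x ∈ Submodule.span (ZMod 2)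
      {z : M.carrier | z ∈ Submodule.span SteenrodAlgebra {x} ∧
        ∃ m, z ∈ M.grading m ∧ Sq m • z = 0} := by
  set p := Submodule.span SteenrodAlgebra {x} with hp
  set K : Set M.carrier := {z | z ∈ p ∧ ∃ m, z ∈ M.grading m ∧ Sq m • z = 0} with hK
  have hxK : x ∈ K := ⟨Submodule.mem_span_singleton_self x, n, hx, h0⟩
  have main : ∀ a : SteenrodAlgebra, ∀ z ∈ Submodule.span (ZMod 2) K,
      a • z ∈ Submodule.span (ZMod 2) K := by
    intro a
    have ha : a ∈ Algebra.adjoin (ZMod 2) (Set.range Sq) := by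
      rw [adjoin_sq_top]; trivial
    induction ha using Algebra.adjoin_induction with
    | mem b hb =>
      obtain ⟨i, rfl⟩ := hb
      intro z hz
      induction hz using Submodule.span_induction with
      | mem w hw =>
        obtain ⟨hwp, m, hwm, hw0⟩ := hw
        refine Submodule.subset_span ⟨Submodule.smul_mem p _ hwp, m + i,
          M.sq_mem i m w hwm, key M m i w hwm hw0⟩
      | zero => simp
      | add u v _ _ hu hv => rw [smul_add]; exact Submodule.add_mem _ hu hv
      | smul c u _ hu => rw [smul_comm' M c _ u]; exact Submodule.smul_mem _ c hu
    | algebraMap r =>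
      intro z hz
      rw [algebraMap_smul]
      exact Submodule.smul_mem _ r hz
    | add b c _ _ hb hc =>
      intro z hz
      rw [add_smul]
      exact Submodule.add_mem _ (hb z hz) (hc z hz)
    | mul b c _ _ hb hc =>
      intro z hz
      rw [mul_smul]
      exact hb _ (hc z hz)
  exact main a x (Submodule.subset_span hxK)

/-- The space of elements all of whose homogeneous components are killed by `Sq₀`. -/
def W : Submodule (ZMod 2) M.carrier where
  carrier := {y | ∀ j, Sq j • proj M j y = 0}
  add_mem' := by
    intro u v hu hv j
    rw [map_add, smul_add, hu j, hv j, add_zero]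
  zero_mem' := by intro j; rw [map_zero, smul_zero]
  smul_mem' := by
    intro c u hu j
    rw [map_smul, smul_comm' M c _ _, hu j, smul_zero]

lemma reduced_forward (hr : IsReducedU M) (k : ℕ) :
    ∀ (n : ℕ) (z : M.carrier), z ∈ M.grading n → sq0Iter M k n z = 0 → z = 0 := by
  induction k with
  | zero => intro n z _ h; exact h
  | succ k ih =>
    intro n z hz h
    have hmem : ∀ j, sq0Iter M j n z ∈ M.grading (2 ^ j * n) := by
      intro j
      induction j with
      | zero => simpa [sq0Iter] using hz
      | succ j ihj =>
        have := M.sq_mem (2 ^ j * n) (2 ^ j * n) _ ihj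
        have he : 2 ^ j * n + 2 ^ j * n = 2 ^ (j + 1) * n := by ring
        rw [he] at this
        exact this
    have h' : Sq (2 ^ k * n) • sq0Iter M k n z = 0 := h
    have := hr (2 ^ k * n) (sq0Iter M k n z) (hmem k) h'
    exact ih n z hz this

end RedAux

end AuxProof

/-- Lemma 2.2.1.  An unstable `A`-module is reduced if and only if it
contains no non-trivial nilpotent unstable `A`-submodule. -/
theorem reduced_iff_no_nilpotent_submodule (M : UnstableModule) :
    IsReducedU M ↔
    ∀ p : Submodule SteenrodAlgebra M.carrier, IsGradedSub M p →
      (∀ (n : ℕ) (x : M.carrier), x ∈ p → x ∈ M.grading n → ∃ k, sq0Iter M k n x = 0) →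
      p = ⊥ := by
  constructor
  · intro hr p hgr hnil
    rw [eq_bot_iff]
    intro y hy
    have hsub : ((p : Set M.carrier) ∩
        ⋃ n, ((M.grading n : Submodule (ZMod 2) M.carrier) : Set M.carrier)) ⊆ {0} := by
      rintro z ⟨hzp, hzu⟩
      obtain ⟨_, ⟨m, rfl⟩, hzm⟩ := hzu
      obtain ⟨k, hk⟩ := hnil m z hzp hzm
      exact RedAux.reduced_forward M hr k m z hzm hk
    have hy' : y ∈ Submodule.span (ZMod 2) ({0} : Set M.carrier) :=
      Submodule.span_mono hsub (hgr y hy)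
    simpa using hy'
  · intro H n x hx h0
    have hspan := fun a => RedAux.span_action M x n hx h0 a
    have hgr : IsGradedSub M (Submodule.span SteenrodAlgebra {x}) := by
      intro z hz
      obtain ⟨a, rfl⟩ := Submodule.mem_span_singleton.mp hz
      refine Submodule.span_mono ?_ (hspan a)
      rintro w ⟨hwp, m, hwm, _⟩
      exact ⟨hwp, Set.mem_iUnion.mpr ⟨m, hwm⟩⟩
    have hnil : ∀ (m : ℕ) (y : M.carrier), y ∈ Submodule.span SteenrodAlgebra {x} →
        y ∈ M.grading m → ∃ k, sq0Iter M k m y = 0 := by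
      intro m y hyp hym
      refine ⟨1, ?_⟩
      have hyW : y ∈ RedAux.W M := by
        obtain ⟨a, rfl⟩ := Submodule.mem_span_singleton.mp hyp
        have hKW : {z : M.carrier | z ∈ Submodule.span SteenrodAlgebra {x} ∧
            ∃ m, z ∈ M.grading m ∧ Sq m • z = 0} ⊆ (RedAux.W M : Set M.carrier) := by
          rintro z ⟨_, m', hzm', hz0⟩
          intro j
          rcases eq_or_ne j m' with rfl | hne
          · rw [RedAux.proj_of_mem_same M hzm', hz0]
          · rw [RedAux.proj_of_mem_ne M hne.symm hzm', smul_zero]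
        exact Submodule.span_le.mpr hKW (hspan a)
      have h1 := hyW m
      rw [RedAux.proj_of_mem_same M hym] at h1
      show Sq (2 ^ 0 * m) • sq0Iter M 0 m y = 0
      simpa [sq0Iter] using h1
    have hbot := H (Submodule.span SteenrodAlgebra {x}) hgr hnil
    have hxp : x ∈ Submodule.span SteenrodAlgebra ({x} : Set M.carrier) :=
      Submodule.mem_span_singleton_self x
    rw [hbot] at hxp
    simpa using hxp
end

section
/- Let P and Q be unstable H*V-A-modules that are free as H*V-modules, and let f: P → Q be an injective H*V-linear and A-linear map. If P̄ is a reduced unstable A-module, then the induced map f̄: P̄ → Q̄ is injective. -/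
noncomputable section
namespace Stmt10

open Submodule DirectSum

set_option maxHeartbeats 1000000
set_option synthInstance.maxHeartbeats 400000

lemma zmod2_cases (c : ZMod 2) : c = 0 ∨ c = 1 := by revert c; decide

lemma sq_zero_eq_one : Sq 0 = 1 := by
  have h := RingQuot.mkAlgHom_rel (ZMod 2) AdemRel.unit
  rw [Sq, h, map_one]

lemma sq_zero_smul {X : Type} [AddCommGroup X] [Module SteenrodAlgebra X] (x : X) :
    Sq 0 • x = x := by rw [sq_zero_eq_one, one_smul]

/-- smul by `ZMod 2` scalars commutes with `SteenrodAlgebra`-linear maps. -/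
lemma zsmul_map {M N : UnstableModule} (f : UnstableHom M N) (c : ZMod 2) (a : M.carrier) :
    f.toFun (c • a) = c • f.toFun a := by
  have h : c • a = (c • (1 : SteenrodAlgebra)) • a := by rw [smul_assoc, one_smul]
  rw [h, map_smul, smul_assoc, one_smul]

/-- The decomposition equivalence of an unstable module. -/
noncomputable def deco (M : UnstableModule) : (⨁ n : ℕ, M.grading n) ≃ₗ[ZMod 2] M.carrier :=
  LinearEquiv.ofBijective (DirectSum.coeLinearMap M.grading) M.isInternal

/-- The degree-`n` component of an element. -/
noncomputable def comp (M : UnstableModule) (n : ℕ) (x : M.carrier) : M.carrier :=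
  ((deco M).symm x n : M.carrier)

lemma comp_add (M : UnstableModule) (n : ℕ) (x y : M.carrier) :
    comp M n (x + y) = comp M n x + comp M n y := by
  unfold comp
  rw [map_add, DirectSum.add_apply, Submodule.coe_add]

lemma comp_zero (M : UnstableModule) (n : ℕ) : comp M n (0 : M.carrier) = 0 := by
  unfold comp
  rw [map_zero, DirectSum.zero_apply, Submodule.coe_zero]

lemma comp_smul (M : UnstableModule) (n : ℕ) (c : ZMod 2) (x : M.carrier) :
    comp M n (c • x) = c • comp M n x := by
  unfold comp
  rw [map_smul, DFinsupp.smul_apply, Submodule.coe_smul]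

lemma comp_mem (M : UnstableModule) (n : ℕ) (x : M.carrier) : comp M n x ∈ M.grading n :=
  ((deco M).symm x n).2

lemma comp_of_mem_same (M : UnstableModule) {n : ℕ} {x : M.carrier} (hx : x ∈ M.grading n) :
    comp M n x = x := by
  unfold comp deco
  rw [M.isInternal.ofBijective_coeLinearMap_of_mem hx]

lemma comp_of_mem_ne (M : UnstableModule) {n k : ℕ} {x : M.carrier} (hx : x ∈ M.grading n)
    (h : n ≠ k) : comp M k x = 0 := by
  unfold comp deco
  rw [M.isInternal.ofBijective_coeLinearMap_of_mem_ne h hx, Submodule.coe_zero]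

/-- Induction principle: homogeneous elements generate. -/
lemma hom_induction (M : UnstableModule) {p : M.carrier → Prop}
    (h0 : p 0) (hadd : ∀ a b, p a → p b → p (a + b))
    (hmem : ∀ (s : ℕ) (x : M.carrier), x ∈ M.grading s → p x) : ∀ x, p x := by
  intro x
  obtain ⟨y, rfl⟩ := (deco M).surjective x
  induction y using DirectSum.induction_on with
  | zero => rw [map_zero]; exact h0
  | of i v =>
      have hv : (deco M) (DirectSum.of (fun n => M.grading n) i v) = (v : M.carrier) := by
        unfold deco
        exact DirectSum.coeLinearMap_of M.grading i v
      rw [hv]; exact hmem i _ v.2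
  | add a b ha hb => rw [map_add]; exact hadd _ _ ha hb

lemma eq_zero_of_comp (M : UnstableModule) (x : M.carrier) (h : ∀ n, comp M n x = 0) :
    x = 0 := by
  obtain ⟨y, rfl⟩ := (deco M).surjective x
  have hy : y = 0 := by
    refine DFinsupp.ext fun n => ?_
    have hn := h n
    unfold comp at hn
    rw [LinearEquiv.symm_apply_apply] at hn
    rw [DFinsupp.zero_apply]
    exact Subtype.ext hn
  rw [hy, map_zero]

/-- `comp` commutes with additive grading-preserving maps. -/
lemma comp_commute0 {M N : UnstableModule} (φ : M.carrier → N.carrier)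
    (h0 : φ 0 = 0) (hadd : ∀ a b, φ (a + b) = φ a + φ b)
    (hgr : ∀ (s : ℕ) (x : M.carrier), x ∈ M.grading s → φ x ∈ N.grading s) (k : ℕ) :
    ∀ x, comp N k (φ x) = φ (comp M k x) := by
  refine hom_induction M ?_ ?_ ?_
  · rw [h0, comp_zero, comp_zero, h0]
  · intro a b ha hb
    rw [hadd, comp_add, comp_add, ha, hb, hadd]
  · intro s x hx
    by_cases h : s = k
    · subst h
      rw [comp_of_mem_same N (hgr _ _ hx), comp_of_mem_same M hx]
    · rw [comp_of_mem_ne N (hgr _ _ hx) h, comp_of_mem_ne M hx h, h0]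

/-- `comp` commutes with additive degree-one-shifting maps. -/
lemma comp_commute1 {M N : UnstableModule} (φ : M.carrier → N.carrier)
    (h0 : φ 0 = 0) (hadd : ∀ a b, φ (a + b) = φ a + φ b)
    (hgr : ∀ (s : ℕ) (x : M.carrier), x ∈ M.grading s → φ x ∈ N.grading (s + 1)) (k : ℕ) :
    ∀ x, comp N (k + 1) (φ x) = φ (comp M k x) := by
  refine hom_induction M ?_ ?_ ?_
  · rw [h0, comp_zero, comp_zero, h0]
  · intro a b ha hb
    rw [hadd, comp_add, comp_add, ha, hb, hadd]
  · intro s x hx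
    by_cases h : s = k
    · subst h
      rw [comp_of_mem_same N (hgr _ _ hx), comp_of_mem_same M hx]
    · rw [comp_of_mem_ne N (hgr _ _ hx) (by omega), comp_of_mem_ne M hx h, h0]

lemma comp_shift1_zero {M N : UnstableModule} (φ : M.carrier → N.carrier)
    (h0 : φ 0 = 0) (hadd : ∀ a b, φ (a + b) = φ a + φ b)
    (hgr : ∀ (s : ℕ) (x : M.carrier), x ∈ M.grading s → φ x ∈ N.grading (s + 1)) :
    ∀ x, comp N 0 (φ x) = 0 := by
  refine hom_induction M ?_ ?_ ?_
  · rw [h0, comp_zero]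
  · intro a b ha hb
    rw [hadd, comp_add, ha, hb, add_zero]
  · intro s x hx
    exact comp_of_mem_ne N (hgr _ _ hx) (by omega)


section HVPart

variable {d : ℕ} {V : HVSetup d}

/-- The submodule `(t_m, t_{m+1}, …, t_d)·E` of an unstable `H^*V`-`A`-module. -/
def Igen (V : HVSetup d) (E : HVModule V) (m : ℕ) : Submodule (ZMod 2) E.E.carrier :=
  Submodule.span (ZMod 2)
    {y : E.E.carrier | ∃ (i : Fin d) (z : E.E.carrier), m ≤ (i : ℕ) ∧ y = V.gens i • z}

/-- The submodule `H̃^*V·E`, i.e. the kernel of `barπ`. -/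
def Kbar (V : HVSetup d) (E : HVModule V) : Submodule (ZMod 2) E.E.carrier :=
  Submodule.span (ZMod 2)
    {z : E.E.carrier | ∃ (m : ℕ) (h : V.H) (x : E.E.carrier),
        1 ≤ m ∧ h ∈ V.grading m ∧ z = h • x}

lemma mem_kbar_iff (E : HVModule V) (y : E.E.carrier) :
    E.barπ.toFun y = 0 ↔ y ∈ Kbar V E := E.barπ_ker y

/-- `Igen` is stable under the `H^*V`-action. -/
lemma hsmul_Igen (E : HVModule V) (m : ℕ) (h : V.H) {y : E.E.carrier}
    (hy : y ∈ Igen V E m) : h • y ∈ Igen V E m := by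
  induction hy using Submodule.span_induction with
  | mem y hy =>
      obtain ⟨i, z, him, rfl⟩ := hy
      rw [smul_smul, mul_comm, ← smul_smul]
      exact Submodule.subset_span ⟨i, h • z, him, rfl⟩
  | zero => rw [smul_zero]; exact Submodule.zero_mem _
  | add a b _ _ ha hb => rw [smul_add]; exact Submodule.add_mem _ ha hb
  | smul c a _ ha =>
      rcases zmod2_cases c with rfl | rfl
      · rw [zero_smul, smul_zero]; exact Submodule.zero_mem _
      · rw [one_smul]; exact ha

lemma gen_smul_mem_kbar (E : HVModule V) (i : Fin d) (x : E.E.carrier) :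
    V.gens i • x ∈ Kbar V E :=
  Submodule.subset_span ⟨1, V.gens i, x, le_refl 1, V.gens_deg i, rfl⟩

/-- `Kbar` is stable under the Steenrod action. -/
lemma sqsmul_kbar (E : HVModule V) (k : ℕ) {y : E.E.carrier} (hy : y ∈ Kbar V E) :
    Sq k • y ∈ Kbar V E := by
  induction hy using Submodule.span_induction with
  | mem y hy =>
      obtain ⟨mm, h, x, hmm, hh, rfl⟩ := hy
      rw [E.cartan]
      refine Submodule.sum_mem _ fun a _ => ?_
      exact Submodule.subset_span ⟨mm + a, Sq a • h, Sq (k - a) • x, by omega,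
        V.sq_mem a mm h hh, rfl⟩
  | zero => rw [smul_zero]; exact Submodule.zero_mem _
  | add a b _ _ ha hb => rw [smul_add]; exact Submodule.add_mem _ ha hb
  | smul c a _ ha =>
      rcases zmod2_cases c with rfl | rfl
      · rw [zero_smul, smul_zero]; exact Submodule.zero_mem _
      · rw [one_smul]; exact ha

/-- components of elements of `Igen` stay in `Igen`. -/
lemma comp_Igen (E : HVModule V) (m k : ℕ) {y : E.E.carrier} (hy : y ∈ Igen V E m) :
    comp E.E k y ∈ Igen V E m := by
  induction hy using Submodule.span_induction with
  | mem y hy =>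
      obtain ⟨i, z, him, rfl⟩ := hy
      have h0 : (V.gens i • (0 : E.E.carrier)) = 0 := smul_zero _
      have hadd : ∀ a b : E.E.carrier, V.gens i • (a + b) = V.gens i • a + V.gens i • b :=
        fun a b => smul_add _ a b
      have hgr : ∀ (s : ℕ) (x : E.E.carrier), x ∈ E.E.grading s →
          V.gens i • x ∈ E.E.grading (s + 1) := by
        intro s x hx
        have := E.smul_grading 1 s (V.gens i) x (V.gens_deg i) hx
        rwa [Nat.add_comm] at this
      cases k with
      | zero =>
          rw [comp_shift1_zero (fun w => V.gens i • w) h0 hadd hgr z]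
          exact Submodule.zero_mem _
      | succ k =>
          rw [comp_commute1 (fun w => V.gens i • w) h0 hadd hgr k z]
          exact Submodule.subset_span ⟨i, comp E.E k z, him, rfl⟩
  | zero => rw [comp_zero]; exact Submodule.zero_mem _
  | add a b _ _ ha hb => rw [comp_add]; exact Submodule.add_mem _ ha hb
  | smul c a _ ha => rw [comp_smul]; exact Submodule.smul_mem _ c ha

lemma comp_Igen_zero (E : HVModule V) (m : ℕ) {y : E.E.carrier} (hy : y ∈ Igen V E m) :
    comp E.E 0 y = 0 := by
  induction hy using Submodule.span_induction with
  | mem y hy =>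
      obtain ⟨i, z, him, rfl⟩ := hy
      refine comp_shift1_zero (fun w => V.gens i • w) (smul_zero _)
        (fun a b => smul_add _ a b) ?_ z
      intro s x hx
      have := E.smul_grading 1 s (V.gens i) x (V.gens_deg i) hx
      rwa [Nat.add_comm] at this
  | zero => rw [comp_zero]
  | add a b _ _ ha hb => rw [comp_add, ha, hb, add_zero]
  | smul c a _ ha => rw [comp_smul, ha, smul_zero]

/-- The fundamental Cartan computation: `Sq^{j+1}(t_i q) = t_i Sq^{j+1} q + t_i² Sq^j q`. -/
lemma sq_gen_smul (E : HVModule V) (i : Fin d) (j : ℕ) (w : E.E.carrier) :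
    Sq (j + 1) • (V.gens i • w) =
      V.gens i • (Sq (j + 1) • w) + V.gens i • (V.gens i • (Sq j • w)) := by
  rw [E.cartan]
  rw [Finset.sum_range_succ']
  rw [Finset.sum_range_succ']
  have hz : ∀ a ∈ Finset.range j,
      (Sq (a + 1 + 1) • V.gens i) • (Sq (j + 1 - (a + 1 + 1)) • w) = 0 := by
    intro a _
    rw [V.instability (a + 1 + 1) 1 (V.gens i) (V.gens_deg i) (by omega), zero_smul]
  rw [Finset.sum_eq_zero hz, zero_add]
  have h1 : (Sq (0 + 1) • V.gens i) • (Sq (j + 1 - (0 + 1)) • w)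
      = V.gens i • (V.gens i • (Sq j • w)) := by
    have e : j + 1 - (0 + 1) = j := by omega
    have e' : (0 : ℕ) + 1 = 1 := rfl
    rw [e, e', V.sq_one_gen i, mul_smul]
  have h0 : (Sq 0 • V.gens i) • (Sq (j + 1 - 0) • w) = V.gens i • (Sq (j + 1) • w) := by
    rw [Nat.sub_zero, sq_zero_smul]
  rw [h1, h0, add_comm]

end HVPart

section HKPart

variable {d : ℕ} {V : HVSetup d}

lemma pow_mem_grading (i : Fin d) (e : ℕ) : V.gens i ^ e ∈ V.grading e := by
  induction e with
  | zero => rw [pow_zero]; exact V.one_mem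
  | succ e ih => rw [pow_succ]; exact V.mul_mem e 1 _ _ ih (V.gens_deg i)

lemma prod_mem_grading (s : Finset (Fin d)) (e : Fin d → ℕ) :
    (∏ i ∈ s, V.gens i ^ e i) ∈ V.grading (∑ i ∈ s, e i) := by
  induction s using Finset.induction_on with
  | empty => rw [Finset.prod_empty, Finset.sum_empty]; exact V.one_mem
  | insert a s hnot ih =>
      rw [Finset.prod_insert hnot, Finset.sum_insert hnot]
      exact V.mul_mem _ _ _ _ (pow_mem_grading _ _) ih

lemma prod_factor (e : Fin d → ℕ) (i : Fin d) (w : ℕ) (he : e i = w + 1) :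
    (∏ j, V.gens j ^ e j) = V.gens i * ∏ j, V.gens j ^ (Function.update e i w) j := by
  rw [← Finset.mul_prod_erase Finset.univ (fun j => V.gens j ^ e j) (Finset.mem_univ i),
      ← Finset.mul_prod_erase Finset.univ (fun j => V.gens j ^ (Function.update e i w) j)
        (Finset.mem_univ i)]
  have h1 : (∏ j ∈ Finset.univ.erase i, V.gens j ^ (Function.update e i w) j)
      = ∏ j ∈ Finset.univ.erase i, V.gens j ^ e j := by
    refine Finset.prod_congr rfl fun j hj => ?_
    rw [Function.update_of_ne (Finset.mem_erase.mp hj).1]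
  rw [h1, Function.update_self, he, pow_succ', mul_assoc]

lemma kbar_le_Igen0 (E : HVModule V) : Kbar V E ≤ Igen V E 0 := by
  rw [Kbar, Submodule.span_le]
  rintro z ⟨mm, h, x, hmm, hh, rfl⟩
  let J : Submodule (ZMod 2) V.H :=
    { carrier := {h : V.H | comp V.toUnstable 0 h = 0 ∧ ∀ x : E.E.carrier, h • x ∈ Igen V E 0}
      add_mem' := by
        rintro a b ⟨ha0, ha⟩ ⟨hb0, hb⟩
        exact ⟨by rw [comp_add, ha0, hb0, add_zero],
          fun x => by rw [add_smul]; exact Submodule.add_mem _ (ha x) (hb x)⟩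
      zero_mem' := ⟨comp_zero _ _, fun x => by rw [zero_smul]; exact Submodule.zero_mem _⟩
      smul_mem' := by
        rintro c a ⟨ha0, ha⟩
        rcases zmod2_cases c with rfl | rfl
        · exact ⟨by rw [zero_smul]; exact comp_zero _ _,
            fun x => by rw [zero_smul, zero_smul]; exact Submodule.zero_mem _⟩
        · exact ⟨by rwa [one_smul], by rwa [one_smul]⟩ }
  have hmon : ∀ e : Fin d → ℕ, e ≠ 0 → (∏ j, V.gens j ^ e j) ∈ J := by
    intro e he
    obtain ⟨i, hi⟩ := Function.ne_iff.mp he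
    have hi' : e i ≠ 0 := hi
    obtain ⟨w, hw⟩ : ∃ w, e i = w + 1 := ⟨e i - 1, by omega⟩
    constructor
    · refine comp_of_mem_ne V.toUnstable (prod_mem_grading Finset.univ e) ?_
      have : e i ≤ ∑ j, e j := Finset.single_le_sum (fun j _ => Nat.zero_le (e j))
        (Finset.mem_univ i)
      omega
    · intro x
      rw [prod_factor e i w hw, mul_smul]
      exact Submodule.subset_span ⟨i, _, Nat.zero_le _, rfl⟩
  have hspan : (⊤ : Submodule (ZMod 2) V.H) ≤ (Submodule.span (ZMod 2) {(1 : V.H)}) ⊔ J := by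
    refine le_trans V.monomial_span ?_
    rw [Submodule.span_le]
    rintro _ ⟨e, rfl⟩
    by_cases he : e = 0
    · subst he
      apply Submodule.mem_sup_left
      refine Submodule.mem_span_singleton.mpr ⟨1, ?_⟩
      simp
    · exact Submodule.mem_sup_right (hmon e he)
  obtain ⟨u, hu, h', hJ, huh⟩ := Submodule.mem_sup.mp (hspan (Submodule.mem_top (x := h)))
  obtain ⟨c, rfl⟩ := Submodule.mem_span_singleton.mp hu
  have hcomp : comp V.toUnstable 0 h = c • (1 : V.H) := by
    rw [← huh, comp_add, comp_smul, comp_of_mem_same V.toUnstable V.one_mem, hJ.1, add_zero]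
  have hhne : comp V.toUnstable 0 h = 0 := comp_of_mem_ne V.toUnstable hh (by omega)
  have hc : c • (1 : V.H) = 0 := by rw [← hcomp, hhne]
  have hone : (1 : V.H) ≠ 0 := by
    have h2 := V.monomial_indep.ne_zero (0 : Fin d → ℕ)
    simpa using h2
  rcases zmod2_cases c with rfl | rfl
  · rw [← huh, zero_smul, zero_add]
    exact hJ.2 x
  · rw [one_smul] at hc
    exact absurd hc hone

/-- Decomposition of a homogeneous component of an element of `Igen`. -/
lemma dec (E : HVModule V) (m n' : ℕ) {y : E.E.carrier} (hy : y ∈ Igen V E m) :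
    ∃ q : Fin d → E.E.carrier, (∀ i, q i ∈ E.E.grading n') ∧
      (∀ i : Fin d, (i : ℕ) < m → q i = 0) ∧
      comp E.E (n' + 1) y = ∑ i, V.gens i • q i := by
  induction hy using Submodule.span_induction with
  | mem y hy =>
      obtain ⟨i, z, him, rfl⟩ := hy
      refine ⟨fun j => if j = i then comp E.E n' z else 0, ?_, ?_, ?_⟩
      · intro j
        dsimp only
        by_cases hj : j = i
        · rw [if_pos hj]; exact comp_mem _ _ _
        · rw [if_neg hj]; exact Submodule.zero_mem _
      · intro j hj
        have hji : j ≠ i := by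
          intro hji; subst hji; omega
        dsimp only
        rw [if_neg hji]
      · have hc : comp E.E (n' + 1) (V.gens i • z) = V.gens i • comp E.E n' z := by
          refine comp_commute1 (fun w => V.gens i • w) (smul_zero _)
            (fun a b => smul_add _ a b) ?_ n' z
          intro s x hx
          have h3 := E.smul_grading 1 s (V.gens i) x (V.gens_deg i) hx
          rwa [Nat.add_comm] at h3
        rw [hc, Finset.sum_eq_single i (fun j _ hj => by dsimp only; rw [if_neg hj, smul_zero])
          (fun hi => absurd (Finset.mem_univ i) hi)]
        dsimp only
        rw [if_pos rfl]
  | zero =>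
      exact ⟨0, fun i => Submodule.zero_mem _, fun i _ => rfl, by
        rw [comp_zero]
        simp⟩
  | add a b _ _ ha hb =>
      obtain ⟨qa, hqa1, hqa2, hqa3⟩ := ha
      obtain ⟨qb, hqb1, hqb2, hqb3⟩ := hb
      refine ⟨qa + qb, fun i => Submodule.add_mem _ (hqa1 i) (hqb1 i),
        fun i hi => by simp only [Pi.add_apply, hqa2 i hi, hqb2 i hi, add_zero], ?_⟩
      rw [comp_add, hqa3, hqb3, ← Finset.sum_add_distrib]
      exact Finset.sum_congr rfl fun i _ => (smul_add _ _ _).symm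
  | smul c a _ ha =>
      rcases zmod2_cases c with rfl | rfl
      · refine ⟨0, fun i => Submodule.zero_mem _, fun i _ => rfl, ?_⟩
        rw [zero_smul, comp_zero]
        simp
      · rwa [one_smul]

end HKPart

section ItPart

variable {d : ℕ} {V : HVSetup d}

/-- The range of an unstable morphism, as a `ZMod 2`-submodule. -/
def uRange {M N : UnstableModule} (f : UnstableHom M N) : Submodule (ZMod 2) N.carrier where
  carrier := Set.range f.toFun
  add_mem' := by rintro a b ⟨p, rfl⟩ ⟨r, rfl⟩; exact ⟨p + r, map_add _ _ _⟩
  zero_mem' := ⟨0, map_zero _⟩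
  smul_mem' := by rintro c _ ⟨p, rfl⟩; exact ⟨c • p, zsmul_map f c p⟩

lemma mem_uRange_iff {M N : UnstableModule} (f : UnstableHom M N) (y : N.carrier) :
    y ∈ uRange f ↔ ∃ p, f.toFun p = y := Iff.rfl

/-- iterated `Sq₀` starting in degree `n`. -/
def itSq {X : Type} [AddCommGroup X] [Module SteenrodAlgebra X] : ℕ → ℕ → X → X
  | 0, _, x => x
  | k + 1, n, x => Sq (2 ^ k * n) • itSq k n x

lemma itSq_zero {X : Type} [AddCommGroup X] [Module SteenrodAlgebra X] (n : ℕ) (x : X) :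
    itSq 0 n x = x := rfl

lemma itSq_succ {X : Type} [AddCommGroup X] [Module SteenrodAlgebra X] (k n : ℕ) (x : X) :
    itSq (k + 1) n x = Sq (2 ^ k * n) • itSq k n x := rfl

lemma itSq_zero_elt {X : Type} [AddCommGroup X] [Module SteenrodAlgebra X] (k n : ℕ) :
    itSq k n (0 : X) = 0 := by
  induction k with
  | zero => rfl
  | succ k ih => rw [itSq_succ, ih, smul_zero]

lemma itSq_add {X : Type} [AddCommGroup X] [Module SteenrodAlgebra X] (k n : ℕ) (a b : X) :
    itSq k n (a + b) = itSq k n a + itSq k n b := by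
  induction k with
  | zero => rfl
  | succ k ih => rw [itSq_succ, ih, smul_add, itSq_succ, itSq_succ]

lemma itSq_shift {X : Type} [AddCommGroup X] [Module SteenrodAlgebra X] (k n : ℕ) (x : X) :
    itSq (k + 1) n x = itSq k (n + n) (Sq n • x) := by
  induction k with
  | zero =>
      rw [itSq_succ, itSq_zero, itSq_zero]
      norm_num
  | succ k ih =>
      rw [itSq_succ (k + 1), ih, itSq_succ k (n + n)]
      have h : 2 ^ k * (n + n) = 2 ^ (k + 1) * n := by ring
      rw [h]

lemma itSq_kbar (E : HVModule V) (k n : ℕ) {y : E.E.carrier} (hy : y ∈ Kbar V E) :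
    itSq k n y ∈ Kbar V E := by
  induction k with
  | zero => exact hy
  | succ k ih => rw [itSq_succ]; exact sqsmul_kbar E _ ih

lemma barpi_itSq (E : HVModule V) (k n : ℕ) (x : E.E.carrier) :
    E.barπ.toFun (itSq k n x) = itSq k n (E.barπ.toFun x) := by
  induction k with
  | zero => rfl
  | succ k ih => rw [itSq_succ, map_smul, ih, itSq_succ]

lemma itSq_mem (B : UnstableModule) (k n : ℕ) {x : B.carrier} (hx : x ∈ B.grading n) :
    itSq k n x ∈ B.grading (2 ^ k * n) := by
  induction k with
  | zero =>
      rw [itSq_zero]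
      have h : 2 ^ 0 * n = n := by norm_num
      rw [h]; exact hx
  | succ k ih =>
      rw [itSq_succ]
      have h2 := B.sq_mem (2 ^ k * n) (2 ^ k * n) _ ih
      have h : 2 ^ k * n + 2 ^ k * n = 2 ^ (k + 1) * n := by ring
      rwa [h] at h2

lemma itSq_zero_red (B : UnstableModule) (hred : IsReducedU B) (k n : ℕ) {x : B.carrier}
    (hx : x ∈ B.grading n) (h : itSq k n x = 0) : x = 0 := by
  induction k with
  | zero => exact h
  | succ k ih =>
      refine ih (hred (2 ^ k * n) (itSq k n x) (itSq_mem B k n hx) ?_)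
      rw [← itSq_succ]
      exact h

end ItPart

section MainPart

variable {d : ℕ} {V : HVSetup d} {P Q : HVModule V}

lemma comp_sub (M : UnstableModule) (n : ℕ) (x y : M.carrier) :
    comp M n (x - y) = comp M n x - comp M n y := by
  rw [sub_eq_add_neg, sub_eq_add_neg, ← neg_one_smul (ZMod 2) y, comp_add, comp_smul,
    neg_one_smul]

lemma main_ind (f : HVHom V P Q) (hf : Function.Injective f.toFun) :
    ∀ (k m : ℕ), d ≤ m + k → ∀ (n : ℕ) (x : P.E.carrier), x ∈ P.E.grading n →
      f.toFun x ∈ Igen V Q m → itSq (k + 1) n x ∈ Kbar V P := by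
  intro k
  induction k with
  | zero =>
      intro m hm n x hx hfx
      have hbot : f.toFun x = 0 := by
        have hle : Igen V Q m ≤ ⊥ := by
          rw [Igen, Submodule.span_le]
          rintro y ⟨i, z, him, rfl⟩
          have hi := i.isLt
          exact False.elim (by omega)
        simpa using hle hfx
      have hx0 : x = 0 := hf (by rw [hbot, map_zero])
      rw [hx0, itSq_zero_elt]
      exact Submodule.zero_mem _
  | succ k IH =>
      intro m hm n x hx hfx
      by_cases hdk : d ≤ m + k
      · have h1 := IH m hdk n x hx hfx
        rw [itSq_succ]
        exact sqsmul_kbar P _ h1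
      · have hmd : m < d := by omega
        cases n with
        | zero =>
            have h1 : comp Q.E 0 (f.toFun x) = f.toFun x :=
              comp_of_mem_same Q.E (f.map_grading 0 x hx)
            have h2 : comp Q.E 0 (f.toFun x) = 0 := comp_Igen_zero Q m hfx
            have hx0 : x = 0 := hf (by rw [← h1, h2, map_zero])
            rw [hx0, itSq_zero_elt]
            exact Submodule.zero_mem _
        | succ n' =>
            set M : Fin d := ⟨m, hmd⟩ with hM
            obtain ⟨q, hq1, hq2, hq3⟩ := dec Q m n' hfx
            have hfxsum : f.toFun x = ∑ i, V.gens i • q i := by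
              rw [← hq3, comp_of_mem_same Q.E (f.map_grading (n' + 1) x hx)]
            set N' : Submodule (ZMod 2) Q.E.carrier :=
              uRange f.toUnstableHom ⊔ Igen V Q (m + 1) with hN'
            have hsmulN' : ∀ (h : V.H) {y : Q.E.carrier}, y ∈ N' → h • y ∈ N' := by
              intro h y hy
              obtain ⟨a, ha, b, hb, rfl⟩ := Submodule.mem_sup.mp hy
              obtain ⟨p, rfl⟩ := ha
              rw [smul_add]
              exact Submodule.add_mem _
                (Submodule.mem_sup_left ⟨h • p, f.map_hsmul h p⟩)
                (Submodule.mem_sup_right (hsmul_Igen Q (m + 1) h hb))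
            have herase : ∀ (F : Fin d → Q.E.carrier),
                (∀ i : Fin d, i ≠ M → F i ∈ Igen V Q (m + 1)) →
                (∑ i ∈ Finset.univ.erase M, F i) ∈ Igen V Q (m + 1) := fun F hF =>
              Submodule.sum_mem _ fun i hi => hF i (Finset.mem_erase.mp hi).1
            have hne_ge : ∀ i : Fin d, i ≠ M → ¬((i : ℕ) < m) → m + 1 ≤ (i : ℕ) := by
              intro i hiM hlt
              have hne : (i : ℕ) ≠ m := fun hc => hiM (Fin.ext hc)
              omega
            have hfsq : ∀ j : ℕ, f.toFun (Sq (j + 1) • x)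
                = ∑ i, (V.gens i • (Sq (j + 1) • q i) + V.gens i • (V.gens i • (Sq j • q i))) := by
              intro j
              rw [map_smul, hfxsum, Finset.smul_sum]
              exact Finset.sum_congr rfl fun i _ => sq_gen_smul Q i j (q i)
            have hrel : ∀ j : ℕ,
                (V.gens M • (Sq (j + 1) • q M) + V.gens M • (V.gens M • (Sq j • q M))) ∈ N' := by
              intro j
              have hsplit : f.toFun (Sq (j + 1) • x)
                  = (V.gens M • (Sq (j + 1) • q M) + V.gens M • (V.gens M • (Sq j • q M)))
                    + ∑ i ∈ Finset.univ.erase M,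
                        (V.gens i • (Sq (j + 1) • q i) + V.gens i • (V.gens i • (Sq j • q i))) := by
                rw [hfsq j, ← Finset.add_sum_erase Finset.univ _ (Finset.mem_univ M)]
              have h1 := eq_sub_of_add_eq hsplit.symm
              rw [h1]
              refine Submodule.sub_mem _ (Submodule.mem_sup_left ⟨Sq (j + 1) • x, rfl⟩)
                (Submodule.mem_sup_right (herase _ ?_))
              intro i hiM
              by_cases hlt : (i : ℕ) < m
              · simp only [hq2 i hlt, smul_zero, add_zero, zero_add]
                exact Submodule.zero_mem _
              · exact Submodule.add_mem _
                  (Submodule.subset_span ⟨i, _, hne_ge i hiM hlt, rfl⟩)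
                  (Submodule.subset_span ⟨i, _, hne_ge i hiM hlt, rfl⟩)
            have hbase : V.gens M • q M ∈ N' := by
              have hsplit : f.toFun x = V.gens M • q M
                  + ∑ i ∈ Finset.univ.erase M, V.gens i • q i := by
                rw [hfxsum, ← Finset.add_sum_erase Finset.univ _ (Finset.mem_univ M)]
              have h1 := eq_sub_of_add_eq hsplit.symm
              rw [h1]
              refine Submodule.sub_mem _ (Submodule.mem_sup_left ⟨x, rfl⟩)
                (Submodule.mem_sup_right (herase _ ?_))
              intro i hiM
              by_cases hlt : (i : ℕ) < m
              · simp only [hq2 i hlt, smul_zero]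
                exact Submodule.zero_mem _
              · exact Submodule.subset_span ⟨i, _, hne_ge i hiM hlt, rfl⟩
            have htel : ∀ r : ℕ, r ≤ n' → (V.gens M ^ (n' - r + 1)) • (Sq r • q M) ∈ N' := by
              intro r
              induction r with
              | zero =>
                  intro _
                  have h1 : (V.gens M ^ (n' - 0 + 1)) • (Sq 0 • q M)
                      = V.gens M ^ n' • (V.gens M • q M) := by
                    rw [sq_zero_smul, Nat.sub_zero, pow_succ, mul_smul]
                  rw [h1]
                  exact hsmulN' _ hbase
              | succ r ihr =>
                  intro hr
                  have ihr' := ihr (by omega)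
                  have h1 := hsmulN' (V.gens M ^ (n' - (r + 1))) (hrel r)
                  rw [smul_add] at h1
                  have h2 : V.gens M ^ (n' - (r + 1)) • (V.gens M • (Sq (r + 1) • q M))
                      = V.gens M ^ (n' - (r + 1) + 1) • (Sq (r + 1) • q M) := by
                    rw [pow_succ, mul_smul]
                  have h3 : V.gens M ^ (n' - (r + 1)) • (V.gens M • (V.gens M • (Sq r • q M)))
                      = V.gens M ^ (n' - r + 1) • (Sq r • q M) := by
                    have he : n' - r + 1 = n' - (r + 1) + 1 + 1 := by omega
                    rw [he, pow_succ, pow_succ, mul_smul, mul_smul]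
                  rw [h2, h3] at h1
                  have h4 := Submodule.sub_mem _ h1 ihr'
                  rwa [add_sub_cancel_right] at h4
            have hkey : V.gens M • (Sq n' • q M) ∈ N' := by
              have h1 := htel n' le_rfl
              rwa [Nat.sub_self, zero_add, pow_one] at h1
            obtain ⟨a, ha, z1, hz1, hsum⟩ := Submodule.mem_sup.mp hkey
            obtain ⟨p1, rfl⟩ := ha
            set D := 1 + (n' + n') with hD
            have hqM_mem : V.gens M • (Sq n' • q M) ∈ Q.E.grading D :=
              Q.smul_grading 1 (n' + n') _ _ (V.gens_deg M) (Q.E.sq_mem n' n' _ (hq1 M))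
            have hcomm0f : ∀ (kk : ℕ) (w : P.E.carrier),
                comp Q.E kk (f.toFun w) = f.toFun (comp P.E kk w) :=
              fun kk w => comp_commute0 f.toFun (map_zero _) (fun a b => map_add _ a b)
                f.map_grading kk w
            set p2 := comp P.E D p1 with hp2def
            have hp2mem : p2 ∈ P.E.grading D := comp_mem _ _ _
            have hfp2 : f.toFun p2 = V.gens M • (Sq n' • q M) - comp Q.E D z1 := by
              rw [hp2def, ← hcomm0f D p1, eq_sub_of_add_eq hsum, comp_sub,
                comp_of_mem_same Q.E hqM_mem]
            have hz2 : comp Q.E D z1 ∈ Igen V Q (m + 1) := comp_Igen Q (m + 1) D hz1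
            have htop : f.toFun (Sq (n' + 1) • x)
                = ∑ i, V.gens i • (V.gens i • (Sq n' • q i)) := by
              rw [hfsq n']
              refine Finset.sum_congr rfl fun i _ => ?_
              rw [Q.E.instability (n' + 1) n' (q i) (hq1 i) (by omega), smul_zero, zero_add]
            have htop2 : f.toFun (Sq (n' + 1) • x)
                = V.gens M • (V.gens M • (Sq n' • q M))
                  + ∑ i ∈ Finset.univ.erase M, V.gens i • (V.gens i • (Sq n' • q i)) := by
              rw [htop, ← Finset.add_sum_erase Finset.univ _ (Finset.mem_univ M)]
            set x2 := Sq (n' + 1) • x - V.gens M • p2 with hx2def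
            have hfx2 : f.toFun x2 ∈ Igen V Q (m + 1) := by
              have h6 : f.toFun x2 = f.toFun (Sq (n' + 1) • x) - V.gens M • f.toFun p2 := by
                rw [hx2def, map_sub, f.map_hsmul]
              rw [h6, htop2, hfp2, smul_sub]
              have h7 : (V.gens M • (V.gens M • (Sq n' • q M))
                    + ∑ i ∈ Finset.univ.erase M, V.gens i • (V.gens i • (Sq n' • q i)))
                  - (V.gens M • (V.gens M • (Sq n' • q M)) - V.gens M • comp Q.E D z1)
                  = (∑ i ∈ Finset.univ.erase M, V.gens i • (V.gens i • (Sq n' • q i)))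
                    + V.gens M • comp Q.E D z1 := by abel
              rw [h7]
              refine Submodule.add_mem _ (herase _ ?_) (hsmul_Igen Q (m + 1) _ hz2)
              intro i hiM
              by_cases hlt : (i : ℕ) < m
              · simp only [hq2 i hlt, smul_zero, add_zero, zero_add]
                exact Submodule.zero_mem _
              · exact Submodule.subset_span ⟨i, _, hne_ge i hiM hlt, rfl⟩
            have hx2mem : x2 ∈ P.E.grading ((n' + 1) + (n' + 1)) := by
              refine Submodule.sub_mem _ (P.E.sq_mem (n' + 1) (n' + 1) x hx) ?_
              have h9 := P.smul_grading 1 D _ p2 (V.gens_deg M) hp2mem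
              have h10 : 1 + D = (n' + 1) + (n' + 1) := by omega
              rwa [h10] at h9
            have hIH := IH (m + 1) (by omega) ((n' + 1) + (n' + 1)) x2 hx2mem hfx2
            rw [itSq_shift (k + 1) (n' + 1) x]
            have hxsplit : Sq (n' + 1) • x = x2 + V.gens M • p2 := by
              rw [hx2def, sub_add_cancel]
            rw [hxsplit, itSq_add]
            exact Submodule.add_mem _ hIH (itSq_kbar P _ _ (gen_smul_mem_kbar P M p2))

end MainPart

end Stmt10
end

open Stmt10 in
/-- Lemma 3.1.2.  Let `P` and `Q` be unstable `H^*V`-`A`-modules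
that are free as `H^*V`-modules and `f : P → Q` an injective morphism of `H^*V-U`.
If `P̄` is a reduced unstable `A`-module, then the induced map `f̄ : P̄ → Q̄` is
injective. -/
theorem bar_injective_of_injective_of_reduced {d : ℕ} (V : HVSetup d) (P Q : HVModule V)
    (hP : Module.Free V.H P.E.carrier) (hQ : Module.Free V.H Q.E.carrier)
    (f : HVHom V P Q) (hf : Function.Injective f.toFun)
    (hred : IsReducedU P.bar)
    (g : UnstableHom P.bar Q.bar)
    (hg : ∀ x, g.toFun (P.barπ.toFun x) = Q.barπ.toFun (f.toFun x)) :
    Function.Injective g.toFun := by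
  have hker : ∀ xb : P.bar.carrier, g.toFun xb = 0 → xb = 0 := by
    intro xb hxb
    refine eq_zero_of_comp P.bar xb fun n => ?_
    set xn := comp P.bar n xb with hxn
    have hxnmem : xn ∈ P.bar.grading n := comp_mem _ _ _
    have hgxn : g.toFun xn = 0 := by
      have h1 : comp Q.bar n (g.toFun xb) = g.toFun (comp P.bar n xb) :=
        comp_commute0 g.toFun (map_zero _) (fun a b => map_add _ a b) g.map_grading n xb
    -- `xn = comp P.bar n xb`
      rw [hxn, ← h1, hxb, comp_zero]
    obtain ⟨x0, hx0⟩ := P.barπ_surj xn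
    set x1 := comp P.E n x0 with hx1
    have hx1mem : x1 ∈ P.E.grading n := comp_mem _ _ _
    have hπx1 : P.barπ.toFun x1 = xn := by
      have h1 : comp P.bar n (P.barπ.toFun x0) = P.barπ.toFun (comp P.E n x0) :=
        comp_commute0 P.barπ.toFun (map_zero _) (fun a b => map_add _ a b)
          P.barπ.map_grading n x0
      rw [hx1, ← h1, hx0, comp_of_mem_same P.bar hxnmem]
    have hπfx1 : Q.barπ.toFun (f.toFun x1) = 0 := by
      rw [← hg x1, hπx1]
      exact hgxn
    have hfx1 : f.toFun x1 ∈ Igen V Q 0 :=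
      kbar_le_Igen0 Q ((mem_kbar_iff Q _).mp hπfx1)
    have hmain := main_ind f hf d 0 (by omega) n x1 hx1mem hfx1
    have hπit : P.barπ.toFun (itSq (d + 1) n x1) = 0 := (mem_kbar_iff P _).mpr hmain
    rw [barpi_itSq, hπx1] at hπit
    exact itSq_zero_red P.bar hred (d + 1) n hxnmem hπit
  intro a b hab
  have h1 : g.toFun (a - b) = 0 := by rw [map_sub, hab, sub_self]
  exact sub_eq_zero.mp (hker _ h1)
end
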